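/- arXiv:1601.00767 — 6 statements merged into one kernel-verified Lean document; each statement's English description precedes it below -/
import Mathlib

section
/- Let M : H ⇉ H be a monotone operator (identified with its graph). (1) If (x,u) ∈ gph M, then G_M(x,u) = 0. (2) If (x,u) ∈ H × H and y, v ∈ H satisfy v ∈ M y and y + v = x + u (i.e., y is the value of the resolvent (I+M)^{-1} at x+u), then G_M(x,u) ≥ ‖x − y‖². In particular G_M is a nonnegative exterior penalty function with respect to the graph of M. -/
open MeasureTheory Set Filter Topology ENNReal RealInnerProductSpace

variable {H : Type*} [NormedAddCommGroup H] [InnerProductSpace ℝ H] [CompleteSpace H]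

/-- A multivalued operator `M : H ⇉ H`, identified with its graph, is monotone. -/
def MonotoneGraph (M : Set (H × H)) : Prop :=
  ∀ p ∈ M, ∀ q ∈ M, (0:ℝ) ≤ ⟪p.1 - q.1, p.2 - q.2⟫

/-- Maximal monotone operator: the graph is not strictly contained in a monotone graph. -/
def MaximalMonotoneGraph (M : Set (H × H)) : Prop :=
  MonotoneGraph M ∧ ∀ N : Set (H × H), MonotoneGraph N → M ⊆ N → N = M

/-- The Brézis–Haraux function `G_M(x,u) = sup_{(y,v) ∈ gph M} ⟨x−y, v−u⟩`. -/
noncomputable def BH (M : Set (H × H)) (x u : H) : EReal :=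
  ⨆ q ∈ M, ((⟪x - q.1, q.2 - u⟫ : ℝ) : EReal)

/-- Value of an extended real in `ℝ≥0∞` (used to express `∫ < +∞` for nonnegative quantities). -/
noncomputable def ennval (x : EReal) : ℝ≥0∞ :=
  if x = ⊤ then ⊤ else ENNReal.ofReal x.toReal

/-- `x` is locally absolutely continuous on `[0,∞)` with derivative `x'`. -/
def LocAC (x x' : ℝ → H) : Prop :=
  (∀ T : ℝ, IntegrableOn x' (Icc 0 T)) ∧
    ∀ t : ℝ, 0 ≤ t → x t = x 0 + ∫ s in (0:ℝ)..t, x' s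

/-- Weak convergence in average of the trajectory `x` to `xlim`. -/
def WeakAvgConv (x : ℝ → H) (xlim : H) : Prop :=
  ∀ y : H, Tendsto (fun t : ℝ => (⟪t⁻¹ • ∫ s in (0:ℝ)..t, x s, y⟫ : ℝ))
    atTop (𝓝 (⟪xlim, y⟫ : ℝ))

/-- Weak convergence of `x(t)` to `xlim` as `t → +∞`. -/
def WeakConv (x : ℝ → H) (xlim : H) : Prop :=
  ∀ y : H, Tendsto (fun t : ℝ => (⟪x t, y⟫ : ℝ)) atTop (𝓝 (⟪xlim, y⟫ : ℝ))

/-- Convexity for `ℝ ∪ {+∞}`-valued (here `EReal`-valued) functions. -/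
def EConvex {E : Type*} [AddCommGroup E] [Module ℝ E] (f : E → EReal) : Prop :=
  ∀ x y : E, ∀ a b : ℝ, 0 ≤ a → 0 ≤ b → a + b = 1 →
    f (a • x + b • y) ≤ (a : EReal) * f x + (b : EReal) * f y

/-- Subdifferential of an extended-real-valued convex function. -/
def ESubdiff (f : H → EReal) (x : H) : Set H :=
  {p : H | ∀ y : H, f x + ((⟪p, y - x⟫ : ℝ) : EReal) ≤ f y}

/-- Graph of the subdifferential operator. -/
def ESubdiffGraph (f : H → EReal) : Set (H × H) :=
  {q : H × H | q.2 ∈ ESubdiff f q.1}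

/-- Graph of the sum of two operators. -/
def GraphSum (A B : Set (H × H)) : Set (H × H) :=
  {q : H × H | ∃ u v : H, (q.1, u) ∈ A ∧ (q.1, v) ∈ B ∧ q.2 = u + v}

/-- Graph of `A + c • B`. -/
def ScaledSum (A B : Set (H × H)) (c : ℝ) : Set (H × H) :=
  {q : H × H | ∃ u v : H, (q.1, u) ∈ A ∧ (q.1, v) ∈ B ∧ q.2 = u + c • v}

/-- Graph of `c • A`. -/
def SmulGraph (c : ℝ) (A : Set (H × H)) : Set (H × H) :=
  {q : H × H | ∃ u : H, (q.1, u) ∈ A ∧ q.2 = c • u}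

/-- Domain of an operator given by its graph. -/
def GraphDom (A : Set (H × H)) : Set H := {x : H | ∃ u : H, (x, u) ∈ A}

/-- Graph of the normal cone operator of a set `C`. -/
def NormalConeGraph (C : Set H) : Set (H × H) :=
  {q : H × H | q.1 ∈ C ∧ ∀ y ∈ C, (⟪q.2, y - q.1⟫ : ℝ) ≤ 0}

/-- Lower semicontinuous hull of an extended-real-valued function. -/
noncomputable def lscHull {E : Type*} [TopologicalSpace E] (f : E → EReal) : E → EReal :=
  fun x => Filter.liminf f (𝓝 x)

/-- Inf-compactness: bounded sublevel sets are relatively compact. -/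
def InfCompact (f : H → EReal) : Prop :=
  ∀ R : ℝ, 0 < R → ∀ l : ℝ, IsCompact (closure {x : H | ‖x‖ ≤ R ∧ f x ≤ (l : EReal)})

/-- Set of global minimizers of `f`. -/
def ArgMin (f : H → EReal) : Set H := {x : H | ∀ y : H, f x ≤ f y}

/-- Set of minimizers of `f` over the set `C`. -/
def ArgMinOn (f : H → EReal) (C : Set H) : Set H := {x ∈ C | ∀ y ∈ C, f x ≤ f y}

/-- Fenchel conjugate of an extended-real-valued function. -/
noncomputable def FConj (f : H → EReal) (p : H) : EReal :=
  ⨆ x : H, (((⟪p, x⟫ : ℝ) : EReal) - f x)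

/-- Support function of a set `C`. -/
noncomputable def SuppFn (C : Set H) (p : H) : EReal :=
  ⨆ x : C, ((⟪p, (x : H)⟫ : ℝ) : EReal)


/-- For a monotone operator `M`, the Brézis–Haraux function vanishes on the
graph of `M`, and `G_M(x,u) ≥ ‖x−y‖²` where `y` is the resolvent value of `x+u`;
in particular `G_M` is a nonnegative exterior penalty function for the graph. -/
theorem brezisHaraux_penalty
    (M : Set (H × H)) (hM : MonotoneGraph M) :
    (∀ x u : H, (x, u) ∈ M → BH M x u = 0) ∧
    (∀ x u y v : H, (y, v) ∈ M → y + v = x + u →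
      ((‖x - y‖ ^ 2 : ℝ) : EReal) ≤ BH M x u) := by
  constructor
  · intro x u hxu
    apply le_antisymm
    · apply iSup₂_le
      intro q hq
      have h := hM q hq (x, u) hxu
      have : (⟪x - q.1, q.2 - u⟫ : ℝ) ≤ 0 := by
        have e : (⟪x - q.1, q.2 - u⟫ : ℝ) = -⟪q.1 - x, q.2 - u⟫ := by
          rw [← inner_neg_left]; congr 1; abel
        simp only [Prod.fst, Prod.snd] at h
        rw [e]; linarith
      exact_mod_cast this
    · have : ((0:ℝ) : EReal) ≤ BH M x u := by
        have h0 : ((⟪x - (x,u).1, (x,u).2 - u⟫ : ℝ) : EReal) ≤ BH M x u :=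
          le_iSup₂ (f := fun q (_ : q ∈ M) => ((⟪x - q.1, q.2 - u⟫ : ℝ) : EReal)) (x,u) hxu
        simpa using h0
      simpa using this
  · intro x u y v hyv h
    have h0 : ((⟪x - (y,v).1, (y,v).2 - u⟫ : ℝ) : EReal) ≤ BH M x u :=
      le_iSup₂ (f := fun q (_ : q ∈ M) => ((⟪x - q.1, q.2 - u⟫ : ℝ) : EReal)) (y,v) hyv
    have hv : v - u = x - y := by
      have : y + v - (y + u) = x + u - (y + u) := by rw [h]
      simpa [sub_eq_iff_eq_add] using this
    have : (⟪x - y, v - u⟫ : ℝ) = ‖x - y‖ ^ 2 := by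
      rw [hv, real_inner_self_eq_norm_sq]
    simp only [] at h0
    rw [this] at h0
    exact h0
end

section
/- Let {A_t : H ⇉ H, t ≥ 0} be a family of maximal monotone operators and let A_∞ : H ⇉ H be maximal monotone. Assume that for every (z,p) ∈ gph A_∞ one has G_{A_t}(z,p) → 0 as t → +∞. Then the resolvents of A_t converge pointwise strongly to the resolvent of A_∞; precisely: for every y ∈ H, if z, p ∈ H satisfy p ∈ A_∞ z and z + p = y, and if for each t ≥ 0 the points y_t, v_t ∈ H satisfy v_t ∈ A_t y_t and y_t + v_t = y, then ‖y_t − z‖ → 0 as t → +∞. -/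
open MeasureTheory Set Filter Topology ENNReal RealInnerProductSpace

variable {H : Type*} [NormedAddCommGroup H] [InnerProductSpace ℝ H] [CompleteSpace H]

/-- If the Brézis–Haraux functions `G_{A_t}(z,p)` tend to `0` for every
`(z,p)` in the graph of `A∞`, then the resolvents of `A_t` converge pointwise strongly
to the resolvent of `A∞`. -/
theorem resolvent_convergence_of_BH_tendsto_zero
    (A : ℝ → Set (H × H)) (Ainf : Set (H × H))
    (hA : ∀ t : ℝ, 0 ≤ t → MaximalMonotoneGraph (A t))
    (hAinf : MaximalMonotoneGraph Ainf)
    (hG : ∀ z p : H, (z, p) ∈ Ainf →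
      Tendsto (fun t : ℝ => BH (A t) z p) atTop (𝓝 (0 : EReal))) :
    ∀ y z p : H, (z, p) ∈ Ainf → z + p = y →
      ∀ yt vt : ℝ → H,
        (∀ t : ℝ, 0 ≤ t → (yt t, vt t) ∈ A t ∧ yt t + vt t = y) →
        Tendsto (fun t : ℝ => ‖yt t - z‖) atTop (𝓝 (0 : ℝ)) := by
  intro y z p hzp hsum yt vt hyt
  have key : ∀ t : ℝ, 0 ≤ t →
      ((‖yt t - z‖ ^ 2 : ℝ) : EReal) ≤ BH (A t) z p := by
    intro t ht
    have hmem := (hyt t ht).1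
    have hvt : vt t - p = z - yt t := by
      have h2 : yt t + vt t = z + p := by rw [(hyt t ht).2, hsum]
      have : vt t - p - (z - yt t) = (yt t + vt t) - (z + p) := by abel
      rw [h2] at this
      simpa [sub_eq_zero] using this.trans (sub_self _)
    have hineq : ((⟪z - (yt t, vt t).1, (yt t, vt t).2 - p⟫ : ℝ) : EReal) ≤ BH (A t) z p :=
      le_iSup₂ (f := fun q (_ : q ∈ A t) => ((⟪z - q.1, q.2 - p⟫ : ℝ) : EReal))
        (yt t, vt t) hmem
    have heq : (⟪z - (yt t, vt t).1, (yt t, vt t).2 - p⟫ : ℝ) = ‖yt t - z‖ ^ 2 := by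
      simp only [hvt]
      rw [real_inner_self_eq_norm_sq]
      rw [show z - yt t = -(yt t - z) by abel, norm_neg]
    rwa [heq] at hineq
  have hsq : Tendsto (fun t : ℝ => ((‖yt t - z‖ ^ 2 : ℝ) : EReal)) atTop (𝓝 (0 : EReal)) := by
    apply tendsto_of_tendsto_of_tendsto_of_le_of_le' (g := fun _ => (0 : EReal))
      (h := fun t => BH (A t) z p) tendsto_const_nhds (hG z p hzp)
    · filter_upwards with t
      exact_mod_cast sq_nonneg ‖yt t - z‖
    · filter_upwards [eventually_ge_atTop (0:ℝ)] with t ht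
      exact key t ht
  have hsq' : Tendsto (fun t : ℝ => (‖yt t - z‖ ^ 2 : ℝ)) atTop (𝓝 (0 : ℝ)) := by
    exact EReal.tendsto_coe.mp hsq
  have : Tendsto (fun t : ℝ => Real.sqrt (‖yt t - z‖ ^ 2)) atTop (𝓝 (Real.sqrt 0)) :=
    (Real.continuous_sqrt.tendsto 0).comp hsq'
  simpa [Real.sqrt_sq (norm_nonneg _)] using this
end

section
/- (Baillon–Brézis) Let A : H ⇉ H be a maximal monotone operator such that S = A^{-1}(0) ≠ ∅. Let x(·) be a strong global solution of the autonomous inclusion ẋ(t) + A(x(t)) ∋ 0. Then there exists x_∞ ∈ A^{-1}(0) such that the averages (1/t)∫₀ᵗ x(s) ds converge weakly to x_∞ in H as t → +∞, i.e., ⟨(1/t)∫₀ᵗ x(s) ds, y⟩ → ⟨x_∞, y⟩ for every y ∈ H. -/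
open MeasureTheory Set Filter Topology ENNReal RealInnerProductSpace

variable {H : Type*} [NormedAddCommGroup H] [InnerProductSpace ℝ H] [CompleteSpace H]

section BBhelpers
variable {H : Type*} [NormedAddCommGroup H] [InnerProductSpace ℝ H] [CompleteSpace H]
set_option linter.unusedSectionVars false
set_option linter.unusedVariables false

lemma bb_inner_integrable {f u : ℝ → H} {a b : ℝ} (hfab : IntegrableOn f (Ioc a b))
    (hucont : ContinuousOn u (Icc a b)) (hab : a ≤ b) :
    IntegrableOn (fun s => (⟪f s, u s⟫ : ℝ)) (Ioc a b) := by
  obtain ⟨C, hC⟩ : ∃ C, ∀ t ∈ Icc a b, ‖u t‖ ≤ C := by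
    rcases (isCompact_Icc.image_of_continuousOn hucont).isBounded.subset_closedBall 0 with ⟨C, hC⟩
    exact ⟨C, fun t ht => by simpa [Metric.mem_closedBall] using hC ⟨t, ht, rfl⟩⟩
  have hm : AEStronglyMeasurable (fun s => (⟪f s, u s⟫ : ℝ)) (volume.restrict (Ioc a b)) :=
    hfab.aestronglyMeasurable.inner
      ((hucont.aestronglyMeasurable measurableSet_Icc).mono_measure
        (Measure.restrict_mono Ioc_subset_Icc_self le_rfl))
  refine (hfab.norm.mul_const C).mono' hm ?_
  filter_upwards [ae_restrict_mem measurableSet_Ioc] with s hs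
  calc ‖(⟪f s, u s⟫ : ℝ)‖ ≤ ‖f s‖ * ‖u s‖ := norm_inner_le_norm _ _
    _ ≤ ‖f s‖ * C := by
        have := hC s (Ioc_subset_Icc_self hs)
        exact mul_le_mul_of_nonneg_left this (norm_nonneg _)


lemma bb_double_sym {f : ℝ → H} {a b : ℝ} (hf : IntegrableOn f (Ioc a b)) :
    ∫ s in Ioc a b, ∫ r in Ioc a b, (⟪f s, f r⟫ : ℝ)
      = 2 * ∫ s in Ioc a b, ∫ r in Ioc a s, (⟪f s, f r⟫ : ℝ) := by
  set μ := volume.restrict (Ioc a b) with hμ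
  set g : ℝ × ℝ → ℝ := fun p => (⟪f p.1, f p.2⟫ : ℝ) with hg
  set Gl : ℝ × ℝ → ℝ := fun p => if p.2 < p.1 then g p else 0 with hGl
  set Gu : ℝ × ℝ → ℝ := fun p => if p.1 < p.2 then g p else 0 with hGu
  have hGlind : Gl = {p : ℝ × ℝ | p.2 < p.1}.indicator g := by
    ext p; by_cases h : p.2 < p.1 <;> simp [hGl, Set.indicator_apply, h]
  have hGuind : Gu = {p : ℝ × ℝ | p.1 < p.2}.indicator g := by
    ext p; by_cases h : p.1 < p.2 <;> simp [hGu, Set.indicator_apply, h]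
  have hgm : AEStronglyMeasurable g (μ.prod μ) :=
    (hf.aestronglyMeasurable.comp_fst (ν := μ)).inner (hf.aestronglyMeasurable.comp_snd (μ := μ))
  have hg_int : Integrable g (μ.prod μ) := by
    refine (hf.norm.mul_prod hf.norm).mono' hgm ?_
    filter_upwards with p
    exact (norm_inner_le_norm _ _).trans (by simp [abs_mul])
  have hGl_int : Integrable Gl (μ.prod μ) := by
    rw [hGlind]; exact hg_int.indicator (measurableSet_lt measurable_snd measurable_fst)
  have hGu_int : Integrable Gu (μ.prod μ) := by
    rw [hGuind]; exact hg_int.indicator (measurableSet_lt measurable_fst measurable_snd)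
  have hslice : ∀ᵐ s ∂μ, Integrable (fun r => g (s, r)) μ := hg_int.prod_right_ae
  -- lower-triangle slice indicator form
  have hlowslice : ∀ s : ℝ, (fun r => Gl (s, r)) = (Iio s).indicator (fun r => g (s, r)) := by
    intro s; ext r; by_cases h : r < s <;> simp [hGl, Set.indicator_apply, h]
  have hupslice : ∀ s : ℝ, (fun r => Gu (s, r)) = (Ioi s).indicator (fun r => g (s, r)) := by
    intro s; ext r; by_cases h : s < r <;> simp [hGu, Set.indicator_apply, h]
  -- split the inner integral a.e.
  have h1 : ∀ᵐ s ∂μ, ∫ r, g (s, r) ∂μ = (∫ r, Gl (s, r) ∂μ) + ∫ r, Gu (s, r) ∂μ := by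
    filter_upwards [hslice] with s hsint
    have hcong : ∫ r, g (s, r) ∂μ = ∫ r, (Gl (s, r) + Gu (s, r)) ∂μ := by
      refine integral_congr_ae ?_
      have hne : ∀ᵐ r ∂μ, r ≠ s := by
        refine ae_restrict_of_ae ?_
        have : (volume : Measure ℝ) {s} = 0 := measure_singleton s
        filter_upwards [measure_eq_zero_iff_ae_notMem.mp this] with r hr
        simpa [Set.mem_singleton_iff] using hr
      filter_upwards [hne] with r hr
      rcases lt_trichotomy r s with h | h | h
      · simp [hGl, hGu, h, not_lt.mpr h.le, lt_asymm h]
      · exact absurd h hr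
      · simp [hGl, hGu, h, not_lt.mpr h.le, lt_asymm h]
    rw [hcong, integral_add]
    · rw [hlowslice s]; exact hsint.indicator measurableSet_Iio
    · rw [hupslice s]; exact hsint.indicator measurableSet_Ioi
  have hTl_int : Integrable (fun s => ∫ r, Gl (s, r) ∂μ) μ := hGl_int.integral_prod_left
  have hTu_int : Integrable (fun s => ∫ r, Gu (s, r) ∂μ) μ := hGu_int.integral_prod_left
  have h2 : ∫ s, ∫ r, g (s, r) ∂μ ∂μ
      = (∫ s, ∫ r, Gl (s, r) ∂μ ∂μ) + ∫ s, ∫ r, Gu (s, r) ∂μ ∂μ := by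
    rw [integral_congr_ae h1, integral_add hTl_int hTu_int]
  -- swap the upper triangle
  have h3 : ∫ s, ∫ r, Gu (s, r) ∂μ ∂μ = ∫ r, ∫ s, Gu (s, r) ∂μ ∂μ :=
    integral_integral_swap (f := fun s r => Gu (s, r)) (by exact hGu_int)
  have h4 : ∫ r, ∫ s, Gu (s, r) ∂μ ∂μ = ∫ s, ∫ r, Gl (s, r) ∂μ ∂μ := by
    have : ∀ s r : ℝ, Gu (s, r) = Gl (r, s) := by
      intro s r; simp only [hGu, hGl, hg]; rw [real_inner_comm]
    simp_rw [this]
  -- identify the lower triangle integral with the Ioc triangle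
  have hres2 : ∀ s ∈ Ioc a b, μ.restrict (Iio s) = volume.restrict (Ioo a s) := by
    intro s hs
    rw [hμ, Measure.restrict_restrict measurableSet_Iio]
    congr 1
    ext r; simp only [mem_inter_iff, mem_Iio, mem_Ioc, mem_Ioo]
    constructor
    · rintro ⟨hr, hra, _⟩; exact ⟨hra, hr⟩
    · rintro ⟨hra, hr⟩; exact ⟨hr, hra, hr.le.trans hs.2⟩
  have h5 : ∫ s, ∫ r, Gl (s, r) ∂μ ∂μ = ∫ s in Ioc a b, ∫ r in Ioc a s, g (s, r) := by
    refine integral_congr_ae ?_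
    filter_upwards [ae_restrict_mem measurableSet_Ioc] with s hs
    rw [hlowslice s, integral_indicator measurableSet_Iio, hres2 s hs,
      ← integral_Ioc_eq_integral_Ioo]
  calc ∫ s, ∫ r, g (s, r) ∂μ ∂μ
      = (∫ s, ∫ r, Gl (s, r) ∂μ ∂μ) + ∫ s, ∫ r, Gu (s, r) ∂μ ∂μ := h2
    _ = 2 * ∫ s in Ioc a b, ∫ r in Ioc a s, g (s, r) := by rw [h3, h4, h5]; ring

lemma bb_energy {f u : ℝ → H} {a b : ℝ} (hab : a ≤ b) (hfab : IntegrableOn f (Ioc a b))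
    (hu : ∀ t ∈ Icc a b, u t = u a + ∫ s in Ioc a t, f s) :
    ‖u b‖ ^ 2 = ‖u a‖ ^ 2 + 2 * ∫ s in Ioc a b, (⟪f s, u s⟫ : ℝ) := by
  have hfIcc : IntegrableOn f (Icc a b) := by
    rwa [integrableOn_Icc_iff_integrableOn_Ioc]
  have hprim : ContinuousOn (fun t => ∫ s in Ioc a t, f s) (Icc a b) :=
    intervalIntegral.continuousOn_primitive hfIcc
  have hucont : ContinuousOn u (Icc a b) := by
    refine ContinuousOn.congr (f := fun t => u a + ∫ s in Ioc a t, f s) ?_ hu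
    exact continuousOn_const.add hprim
  set I : H := ∫ s in Ioc a b, f s with hI
  have hub : u b = u a + I := hu b (right_mem_Icc.mpr hab)
  -- integrability of pieces
  have hint1 : IntegrableOn (fun s => (⟪f s, u a⟫ : ℝ)) (Ioc a b) := by
    refine (hfab.norm.mul_const ‖u a‖).mono'
      (hfab.aestronglyMeasurable.inner aestronglyMeasurable_const) ?_
    filter_upwards with s
    exact (norm_inner_le_norm _ _)
  have hprimm : AEStronglyMeasurable (fun s => ∫ r in Ioc a s, f r)
      (volume.restrict (Ioc a b)) :=
    (hprim.aestronglyMeasurable measurableSet_Icc).mono_measure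
      (Measure.restrict_mono Ioc_subset_Icc_self le_rfl)
  have hCbd : ∀ s ∈ Ioc a b, ‖∫ r in Ioc a s, f r‖ ≤ ∫ r in Ioc a b, ‖f r‖ := by
    intro s hs
    calc ‖∫ r in Ioc a s, f r‖ ≤ ∫ r in Ioc a s, ‖f r‖ := norm_integral_le_integral_norm _
      _ ≤ ∫ r in Ioc a b, ‖f r‖ := by
          refine setIntegral_mono_set hfab.norm ?_ ?_
          · filter_upwards with r using norm_nonneg _
          · exact HasSubset.Subset.eventuallyLE (Ioc_subset_Ioc le_rfl hs.2)
  have hint2 : IntegrableOn (fun s => (⟪f s, ∫ r in Ioc a s, f r⟫ : ℝ)) (Ioc a b) := by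
    refine (hfab.norm.mul_const (∫ r in Ioc a b, ‖f r‖)).mono'
      (hfab.aestronglyMeasurable.inner hprimm) ?_
    filter_upwards [ae_restrict_mem measurableSet_Ioc] with s hs
    calc ‖(⟪f s, ∫ r in Ioc a s, f r⟫ : ℝ)‖ ≤ ‖f s‖ * ‖∫ r in Ioc a s, f r‖ :=
          norm_inner_le_norm _ _
      _ ≤ ‖f s‖ * ∫ r in Ioc a b, ‖f r‖ :=
          mul_le_mul_of_nonneg_left (hCbd s hs) (norm_nonneg _)
  -- decompose the integral
  have hdecomp : ∫ s in Ioc a b, (⟪f s, u s⟫ : ℝ)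
      = (∫ s in Ioc a b, (⟪f s, u a⟫ : ℝ))
        + ∫ s in Ioc a b, (⟪f s, ∫ r in Ioc a s, f r⟫ : ℝ) := by
    rw [← integral_add hint1 hint2]
    refine integral_congr_ae ?_
    filter_upwards [ae_restrict_mem measurableSet_Ioc] with s hs
    rw [hu s (Ioc_subset_Icc_self hs), inner_add_right]
  have hterm1 : ∫ s in Ioc a b, (⟪f s, u a⟫ : ℝ) = ⟪u a, I⟫ := by
    have : ∀ s, (⟪f s, u a⟫ : ℝ) = (innerSL ℝ (u a)) (f s) := by
      intro s; simp [real_inner_comm]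
    simp_rw [this]
    rw [ContinuousLinearMap.integral_comp_comm _ hfab]
    simp [hI]
  have hterm2 : ∫ s in Ioc a b, (⟪f s, ∫ r in Ioc a s, f r⟫ : ℝ) = ‖I‖ ^ 2 / 2 := by
    have hsq : ‖I‖ ^ 2 = ∫ s in Ioc a b, ∫ r in Ioc a b, (⟪f s, f r⟫ : ℝ) := by
      have h1 : ∀ s, (⟪f s, I⟫ : ℝ) = ∫ r in Ioc a b, (⟪f s, f r⟫ : ℝ) := by
        intro s
        rw [show (⟪f s, I⟫ : ℝ) = (innerSL ℝ (f s)) I from rfl,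
          ← ContinuousLinearMap.integral_comp_comm _ hfab]
        rfl
      have h2 : (‖I‖ : ℝ) ^ 2 = ∫ s in Ioc a b, (⟪f s, I⟫ : ℝ) := by
        have : ∀ s, (⟪f s, I⟫ : ℝ) = (innerSL ℝ I) (f s) := by
          intro s; simp [real_inner_comm]
        simp_rw [this]
        rw [ContinuousLinearMap.integral_comp_comm _ hfab]
        simp [← hI, real_inner_self_eq_norm_sq]
      rw [h2]; exact integral_congr_ae (Eventually.of_forall fun s => h1 s)
    have hds := bb_double_sym (f := f) (a := a) (b := b) hfab
    have h3 : ∫ s in Ioc a b, (⟪f s, ∫ r in Ioc a s, f r⟫ : ℝ)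
        = ∫ s in Ioc a b, ∫ r in Ioc a s, (⟪f s, f r⟫ : ℝ) := by
      refine integral_congr_ae ?_
      filter_upwards [ae_restrict_mem measurableSet_Ioc] with s hs
      rw [show (⟪f s, ∫ r in Ioc a s, f r⟫ : ℝ) = (innerSL ℝ (f s)) (∫ r in Ioc a s, f r) from rfl,
        ← ContinuousLinearMap.integral_comp_comm _ (hfab.mono (Ioc_subset_Ioc le_rfl hs.2) le_rfl)]
      rfl
    rw [h3, hsq, hds]
    ring
  rw [hdecomp, hterm1, hterm2, hub]
  rw [norm_add_sq_real]
  ring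

lemma bb_cesaro {h : ℝ → ℝ} (hint : ∀ T : ℝ, IntegrableOn h (Ioc 0 T)) {L : ℝ}
    (hL : Tendsto h atTop (𝓝 L)) :
    Tendsto (fun t => t⁻¹ * ∫ s in Ioc 0 t, h s) atTop (𝓝 L) := by
  rw [Metric.tendsto_atTop]
  intro ε hε
  obtain ⟨T₀, hT₀⟩ := (Metric.tendsto_atTop.mp hL) (ε / 4) (by linarith)
  set T : ℝ := max T₀ 0 with hT
  have hTnn : 0 ≤ T := le_max_right _ _
  have hbd : ∀ s, T ≤ s → |h s - L| ≤ ε / 4 := fun s hs =>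
    (le_of_lt (by simpa [Real.dist_eq] using hT₀ s (le_trans (le_max_left _ _) hs)))
  set C : ℝ := |∫ s in Ioc 0 T, (h s - L)| with hC
  have hCnn : 0 ≤ C := abs_nonneg _
  refine ⟨max (T + 1) (4 * C / ε + 1), fun t ht => ?_⟩
  have htT : T + 1 ≤ t := le_trans (le_max_left _ _) ht
  have htC : 4 * C / ε + 1 ≤ t := le_trans (le_max_right _ _) ht
  have ht0 : 0 < t := by linarith
  have hvol : ∀ p q : ℝ, (volume (Ioc p q)) < ⊤ := fun p q => by
    simp [Real.volume_Ioc]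
  have hconst : ∀ p q : ℝ, IntegrableOn (fun _ : ℝ => L) (Ioc p q) :=
    fun p q => integrableOn_const (hvol p q).ne
  have hint1 : IntegrableOn (fun s => h s - L) (Ioc 0 T) := (hint T).sub (hconst 0 T)
  have hint2 : IntegrableOn (fun s => h s - L) (Ioc T t) :=
    ((hint t).mono (Ioc_subset_Ioc hTnn le_rfl) le_rfl).sub (hconst T t)
  have hsplit : ∫ s in Ioc 0 t, (h s - L)
      = (∫ s in Ioc 0 T, (h s - L)) + ∫ s in Ioc T t, (h s - L) := by
    rw [← setIntegral_union (Ioc_disjoint_Ioc_of_le le_rfl) measurableSet_Ioc hint1 hint2,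
      Ioc_union_Ioc_eq_Ioc hTnn (by linarith)]
  have hmeanL : ∫ s in Ioc 0 t, (h s - L) = (∫ s in Ioc 0 t, h s) - t * L := by
    rw [integral_sub (hint t) (hconst 0 t)]
    simp [Real.volume_Ioc, ENNReal.toReal_ofReal ht0.le, ht0.le]
  have htail : |∫ s in Ioc T t, (h s - L)| ≤ ε / 4 * (t - T) := by
    calc |∫ s in Ioc T t, (h s - L)| ≤ ∫ s in Ioc T t, |h s - L| := by
          simpa [Real.norm_eq_abs] using
            norm_integral_le_integral_norm (μ := volume.restrict (Ioc T t)) (fun s => h s - L)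
      _ ≤ ∫ _s in Ioc T t, (ε / 4) := by
          refine setIntegral_mono_on hint2.abs
            (integrableOn_const (hvol T t).ne) measurableSet_Ioc ?_
          intro s hs; exact hbd s hs.1.le
      _ ≤ ε / 4 * (t - T) := by
          rw [setIntegral_const, Real.volume_real_Ioc_of_le (by linarith), smul_eq_mul, mul_comm]
  have key : |(∫ s in Ioc 0 t, h s) - t * L| ≤ C + ε / 4 * (t - T) := by
    rw [← hmeanL, hsplit]
    exact (abs_add_le _ _).trans (by gcongr <;> simp [hC])
  rw [Real.dist_eq]
  have heq : t⁻¹ * (∫ s in Ioc 0 t, h s) - L = t⁻¹ * ((∫ s in Ioc 0 t, h s) - t * L) := by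
    field_simp
  rw [heq, abs_mul, abs_inv, abs_of_pos ht0]
  have h1 : t⁻¹ * |(∫ s in Ioc 0 t, h s) - t * L| ≤ t⁻¹ * (C + ε / 4 * (t - T)) := by gcongr
  refine lt_of_le_of_lt h1 ?_
  rw [inv_mul_lt_iff₀ ht0]
  have hCε : 4 * C ≤ (t - 1) * ε := (div_le_iff₀ hε).mp (by linarith)
  nlinarith [mul_pos hε ht0]
end BBhelpers

/-- Baillon–Brézis: every strong global solution of the autonomous inclusion
`ẋ(t) + A(x(t)) ∋ 0`, with `A` maximal monotone and `A⁻¹(0) ≠ ∅`, converges weakly in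
average to a zero of `A`. -/
theorem baillon_brezis
    (A : Set (H × H)) (hA : MaximalMonotoneGraph A)
    (hSne : ∃ z : H, (z, 0) ∈ A)
    (x x' : ℝ → H) (hx : LocAC x x')
    (hsol : ∀ᵐ t ∂(volume.restrict (Ioi (0:ℝ))), (x t, -x' t) ∈ A) :
    ∃ xlim : H, (xlim, 0) ∈ A ∧ WeakAvgConv x xlim := by
  classical
  obtain ⟨z₀, hz₀⟩ := hSne
  obtain ⟨hf, hxeq⟩ := hx
  -- basic integrability
  have hfII : ∀ a b : ℝ, 0 ≤ a → a ≤ b → IntegrableOn x' (Ioc a b) := fun a b h0a hab =>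
    (hf b).mono (fun s hs => ⟨h0a.trans hs.1.le, hs.2⟩) le_rfl
  have hfIvl : ∀ a b : ℝ, 0 ≤ a → a ≤ b → IntervalIntegrable x' volume a b := fun a b h0a hab =>
    (intervalIntegrable_iff_integrableOn_Ioc_of_le hab).mpr (hfII a b h0a hab)
  -- additivity of trajectory
  have hxadd : ∀ a t : ℝ, 0 ≤ a → a ≤ t → x t = x a + ∫ s in Ioc a t, x' s := by
    intro a t h0a hat
    rw [hxeq t (h0a.trans hat), hxeq a h0a, ← intervalIntegral.integral_of_le hat,
      ← intervalIntegral.integral_add_adjacent_intervals (hfIvl 0 a le_rfl h0a)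
        (hfIvl a t h0a hat)]
    abel
  -- continuity of trajectory on [0, T]
  have hxcont : ∀ T : ℝ, ContinuousOn x (Icc 0 T) := by
    intro T
    refine ContinuousOn.congr (f := fun t => x 0 + ∫ s in Ioc 0 t, x' s)
      (continuousOn_const.add (intervalIntegral.continuousOn_primitive (hf T))) ?_
    intro t ht
    exact hxadd 0 t le_rfl ht.1
  have hxInt : ∀ a b : ℝ, 0 ≤ a → IntegrableOn x (Ioc a b) := by
    intro a b h0a
    rcases le_or_gt a b with hab | hab
    · exact (((hxcont b).mono (Icc_subset_Icc h0a le_rfl)).integrableOn_compact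
        isCompact_Icc).mono Ioc_subset_Icc_self le_rfl
    · simp [Ioc_eq_empty (not_lt.mpr hab.le), integrableOn_empty]
  -- energy identity
  have hkey : ∀ (y : H) (a b : ℝ), 0 ≤ a → a ≤ b →
      ‖x b - y‖ ^ 2 = ‖x a - y‖ ^ 2 + 2 * ∫ s in Ioc a b, (⟪x' s, x s - y⟫ : ℝ) := by
    intro y a b h0a hab
    have := bb_energy (f := x') (u := fun t => x t - y) hab (hfII a b h0a hab) ?_
    · exact this
    · intro t ht
      rw [hxadd a t h0a ht.1]
      abel
  -- the fundamental inequality from monotonicity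
  have hmono : ∀ y v : H, (y, v) ∈ A → ∀ a b : ℝ, 0 ≤ a → a ≤ b →
      ‖x b - y‖ ^ 2 ≤ ‖x a - y‖ ^ 2
        - 2 * ⟪(∫ s in Ioc a b, x s) - (b - a) • y, v⟫ := by
    intro y v hyv a b h0a hab
    have hucont : ContinuousOn (fun t => x t - y) (Icc a b) :=
      ((hxcont b).mono (Icc_subset_Icc h0a le_rfl)).sub continuousOn_const
    have hint1 : IntegrableOn (fun s => (⟪x' s, x s - y⟫ : ℝ)) (Ioc a b) :=
      bb_inner_integrable (hfII a b h0a hab) hucont hab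
    have hint2 : IntegrableOn (fun s => -(⟪x s - y, v⟫ : ℝ)) (Ioc a b) :=
      (((hucont.inner continuousOn_const).neg).integrableOn_compact isCompact_Icc).mono
        Ioc_subset_Icc_self le_rfl
    have hae : ∀ᵐ s ∂(volume.restrict (Ioc a b)),
        (⟪x' s, x s - y⟫ : ℝ) ≤ -(⟪x s - y, v⟫ : ℝ) := by
      have hsub : Ioc a b ⊆ Ioi (0:ℝ) := fun s hs => lt_of_le_of_lt h0a hs.1
      filter_upwards [ae_restrict_of_ae_restrict_of_subset hsub hsol] with s hs
      have h0 := hA.1 _ hs _ hyv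
      simp only [] at h0
      have : (0:ℝ) ≤ ⟪x s - y, -x' s - v⟫ := h0
      rw [inner_sub_right, inner_neg_right] at this
      have h2 : (⟪x s - y, x' s⟫ : ℝ) ≤ -⟪x s - y, v⟫ := by linarith
      rwa [real_inner_comm] at h2
    have hle : ∫ s in Ioc a b, (⟪x' s, x s - y⟫ : ℝ)
        ≤ ∫ s in Ioc a b, -(⟪x s - y, v⟫ : ℝ) := integral_mono_ae hint1 hint2 hae
    have hrhs : ∫ s in Ioc a b, -(⟪x s - y, v⟫ : ℝ)
        = -⟪(∫ s in Ioc a b, x s) - (b - a) • y, v⟫ := by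
      rw [integral_neg]
      congr 1
      have hxy : IntegrableOn (fun s => x s - y) (Ioc a b) :=
        (hxInt a b h0a).sub (integrableOn_const (by simp [Real.volume_Ioc]))
      have h1 : ∀ s, (⟪x s - y, v⟫ : ℝ) = (innerSL ℝ v) (x s - y) := by
        intro s; simp [real_inner_comm]
      simp_rw [h1]
      rw [ContinuousLinearMap.integral_comp_comm _ hxy]
      have h2 : ∫ s in Ioc a b, (x s - y) = (∫ s in Ioc a b, x s) - (b - a) • y := by
        rw [integral_sub (hxInt a b h0a)
          (integrableOn_const (by simp [Real.volume_Ioc]))]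
        congr 1
        rw [setIntegral_const, Real.volume_real_Ioc_of_le hab]
      rw [h2]
      simp [real_inner_comm]
    have := hkey y a b h0a hab
    nlinarith [hle, hrhs]
  -- distance to zeros decreases
  have hdec : ∀ z : H, (z, 0) ∈ A → ∀ a b : ℝ, 0 ≤ a → a ≤ b →
      ‖x b - z‖ ≤ ‖x a - z‖ := by
    intro z hz a b h0a hab
    have := hmono z 0 hz a b h0a hab
    rw [inner_zero_right] at this
    have hsq : ‖x b - z‖ ^ 2 ≤ ‖x a - z‖ ^ 2 := by linarith
    have := Real.sqrt_le_sqrt hsq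
    rwa [Real.sqrt_sq (norm_nonneg _), Real.sqrt_sq (norm_nonneg _)] at this
  set M : ℝ := ‖z₀‖ + ‖x 0 - z₀‖ with hM
  have hXbd : ∀ t : ℝ, 0 ≤ t → ‖x t‖ ≤ M := by
    intro t ht
    calc ‖x t‖ = ‖z₀ + (x t - z₀)‖ := by congr 1; abel
      _ ≤ ‖z₀‖ + ‖x t - z₀‖ := norm_add_le _ _
      _ ≤ M := by
          have := hdec z₀ hz₀ 0 t le_rfl ht
          rw [hM]; linarith
  set σ : ℝ → H := fun t => t⁻¹ • ∫ s in (0:ℝ)..t, x s with hσ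
  have hσeq : ∀ t : ℝ, 0 < t → σ t = t⁻¹ • ∫ s in Ioc 0 t, x s := by
    intro t ht
    rw [hσ]
    simp only []
    rw [intervalIntegral.integral_of_le ht.le]
  have hσbd : ∀ t : ℝ, 0 < t → ‖σ t‖ ≤ M := by
    intro t ht
    rw [hσeq t ht, norm_smul, norm_inv, Real.norm_eq_abs, abs_of_pos ht]
    have h1 : ‖∫ s in Ioc 0 t, x s‖ ≤ M * t := by
      have := norm_setIntegral_le_of_norm_le_const (μ := volume) (s := Ioc 0 t) (f := x)
        (C := M) (by simp [Real.volume_Ioc]) (fun s hs => hXbd s hs.1.le)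
      rwa [Real.volume_real_Ioc_of_le ht.le, sub_zero] at this
    calc t⁻¹ * ‖∫ s in Ioc 0 t, x s‖ ≤ t⁻¹ * (M * t) := by
          exact mul_le_mul_of_nonneg_left h1 (inv_nonneg.mpr ht.le)
      _ = M := by field_simp
  -- the main asymptotic inequality
  have hE1 : ∀ y v : H, (y, v) ∈ A → ∀ t : ℝ, 0 < t →
      (⟪σ t, v⟫ : ℝ) - ⟪y, v⟫ ≤ ‖x 0 - y‖ ^ 2 / (2 * t) := by
    intro y v hyv t ht
    have h0 := hmono y v hyv 0 t le_rfl ht.le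
    have h1 : (⟪(∫ s in Ioc 0 t, x s) - (t - 0) • y, v⟫ : ℝ) ≤ ‖x 0 - y‖ ^ 2 / 2 := by
      nlinarith [sq_nonneg ‖x t - y‖]
    rw [sub_zero, inner_sub_left, real_inner_smul_left] at h1
    have h2 : (⟪σ t, v⟫ : ℝ) = t⁻¹ * ⟪∫ s in Ioc 0 t, x s, v⟫ := by
      rw [hσeq t ht, real_inner_smul_left]
    rw [h2, le_div_iff₀ (by positivity : (0:ℝ) < 2 * t)]
    have ht' : t ≠ 0 := ne_of_gt ht
    have h4 : (t⁻¹ * (⟪∫ s in Ioc 0 t, x s, v⟫ : ℝ) - ⟪y, v⟫) * (2 * t)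
        = 2 * ((⟪∫ s in Ioc 0 t, x s, v⟫ : ℝ) - t * ⟪y, v⟫) := by
      field_simp
    rw [h4]
    linarith
  -- weak-dual setup
  set Φ : ℝ → WeakDual ℝ H :=
    fun t => StrongDual.toWeakDual (InnerProductSpace.toDual ℝ H (σ t)) with hΦ
  set K : Set (WeakDual ℝ H) := WeakDual.toStrongDual ⁻¹' Metric.closedBall 0 M with hK
  have hKcompact : IsCompact K := WeakDual.isCompact_closedBall (0 : StrongDual ℝ H) M
  have hΦK : ∀ t : ℝ, 1 ≤ t → Φ t ∈ K := by
    intro t ht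
    have h1 : ‖(InnerProductSpace.toDual ℝ H) (σ t)‖ = ‖σ t‖ :=
      (InnerProductSpace.toDual ℝ H).norm_map _
    simp only [hK, hΦ, Set.mem_preimage, Metric.mem_closedBall, dist_zero_right]
    rw [show ‖WeakDual.toStrongDual (StrongDual.toWeakDual ((InnerProductSpace.toDual ℝ H) (σ t)))‖
        = ‖(InnerProductSpace.toDual ℝ H) (σ t)‖ from rfl, h1]
    exact hσbd t (lt_of_lt_of_le one_pos ht)
  have hΦeval : ∀ (w : H) (t : ℝ), (Φ t) w = (⟪σ t, w⟫ : ℝ) := by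
    intro w t
    simp only [hΦ]
    exact InnerProductSpace.toDual_apply_apply
  -- existence of weak cluster points along any subfilter
  have hclus : ∀ F : Filter ℝ, F ≤ atTop → F.NeBot →
      ∃ w : H, ClusterPt (StrongDual.toWeakDual (InnerProductSpace.toDual ℝ H w))
        (Filter.map Φ F) := by
    intro F hF hFne
    have hKF : K ∈ Filter.map Φ F := by
      rw [Filter.mem_map]
      have h1 : Ici (1:ℝ) ∈ F := hF (Ici_mem_atTop 1)
      exact Filter.mem_of_superset h1 (fun t ht => hΦK t ht)
    have hne : (Filter.map Φ F ⊓ 𝓟 K).NeBot := by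
      rw [Filter.inf_principal_neBot_iff]
      intro U hU
      have : U ∩ K ∈ Filter.map Φ F := Filter.inter_mem hU hKF
      exact Filter.nonempty_of_mem this
    obtain ⟨φ, hφK, hφ⟩ := hKcompact.exists_clusterPt (f := Filter.map Φ F ⊓ 𝓟 K) inf_le_right
    refine ⟨(InnerProductSpace.toDual ℝ H).symm (WeakDual.toStrongDual φ), ?_⟩
    have : StrongDual.toWeakDual ((InnerProductSpace.toDual ℝ H)
        ((InnerProductSpace.toDual ℝ H).symm (WeakDual.toStrongDual φ))) = φ := by
      simp
    rw [this]
    exact hφ.mono inf_le_left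
  -- cluster points evaluate to cluster values
  have heval : ∀ (w : H) (F : Filter ℝ),
      ClusterPt (StrongDual.toWeakDual (InnerProductSpace.toDual ℝ H w))
        (Filter.map Φ F) →
      ∀ v : H, ClusterPt (⟪w, v⟫ : ℝ) (Filter.map (fun t => (⟪σ t, v⟫ : ℝ)) F) := by
    intro w F hw v
    have hcont : ContinuousAt (fun φ : WeakDual ℝ H => φ v)
        (StrongDual.toWeakDual (InnerProductSpace.toDual ℝ H w)) :=
      (WeakDual.eval_continuous v).continuousAt
    have hcomp : ((fun φ : WeakDual ℝ H => φ v) ∘ Φ) = fun t => (⟪σ t, v⟫ : ℝ) := by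
      ext t; exact hΦeval v t
    have htend : Tendsto (fun φ : WeakDual ℝ H => φ v) (Filter.map Φ F)
        (Filter.map (fun t => (⟪σ t, v⟫ : ℝ)) F) :=
      Filter.tendsto_map' (by rw [hcomp]; exact Filter.tendsto_map)
    have h5 := hw.map hcont htend
    have h6 : ((StrongDual.toWeakDual ((InnerProductSpace.toDual ℝ H) w)) v : ℝ)
        = (⟪w, v⟫ : ℝ) := InnerProductSpace.toDual_apply_apply
    rwa [h6] at h5
  -- every atTop weak cluster point is a zero of A
  have hzero : ∀ w : H,
      ClusterPt (StrongDual.toWeakDual (InnerProductSpace.toDual ℝ H w))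
        (Filter.map Φ atTop) → (w, 0) ∈ A := by
    intro w hw
    have hineq : ∀ y v : H, (y, v) ∈ A → (⟪w, v⟫ : ℝ) ≤ ⟪y, v⟫ := by
      intro y v hyv
      have hcv := heval w atTop hw v
      refine le_of_forall_pos_le_add ?_
      intro ε hε
      have hev : ∀ᶠ t in atTop, (⟪σ t, v⟫ : ℝ) ≤ ⟪y, v⟫ + ε / 4 := by
        have hD : ∀ᶠ t in atTop, ‖x 0 - y‖ ^ 2 / (2 * t) ≤ ε / 4 := by
          filter_upwards [Filter.eventually_ge_atTop (max 1 (4 * ‖x 0 - y‖ ^ 2 / ε))] with t ht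
          have ht1 : (1:ℝ) ≤ t := le_trans (le_max_left _ _) ht
          have ht2 : 4 * ‖x 0 - y‖ ^ 2 / ε ≤ t := le_trans (le_max_right _ _) ht
          rw [div_le_iff₀ (by linarith : (0:ℝ) < 2 * t)]
          rw [div_le_iff₀ hε] at ht2
          nlinarith [sq_nonneg ‖x 0 - y‖]
        filter_upwards [hD, Filter.eventually_gt_atTop (0:ℝ)] with t htD ht0
        have := hE1 y v hyv t ht0
        linarith
      have hfreq : ∃ᶠ t in atTop, (⟪σ t, v⟫ : ℝ) ∈ Metric.ball (⟪w, v⟫ : ℝ) (ε / 4) :=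
        (mapClusterPt_iff_frequently.mp (mapClusterPt_def.mpr hcv)) _
          (Metric.ball_mem_nhds _ (by linarith))
      obtain ⟨t, ht1, ht2⟩ := (hfreq.and_eventually hev).exists
      rw [Metric.mem_ball, Real.dist_eq, abs_lt] at ht1
      linarith [ht1.1, ht1.2]
    -- maximality
    have hNmono : MonotoneGraph (insert ((w, (0:H))) A) := by
      intro p hp q hq
      rcases Set.mem_insert_iff.mp hp with hp | hp <;>
        rcases Set.mem_insert_iff.mp hq with hq | hq
      · subst hp; subst hq; simp
      · subst hp
        have h1 := hineq q.1 q.2 hq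
        simp only [inner_sub_right, inner_zero_right]
        rw [inner_sub_left]
        have h2 : (⟪w, q.2⟫ : ℝ) - ⟪q.1, q.2⟫ ≤ 0 := by linarith
        linarith
      · subst hq
        have h1 := hineq p.1 p.2 hp
        simp only [inner_sub_right, inner_zero_right, sub_zero]
        rw [inner_sub_left]
        have h2 : (⟪w, p.2⟫ : ℝ) - ⟪p.1, p.2⟫ ≤ 0 := by linarith
        linarith
      · exact hA.1 p hp q hq
    have hNA := hA.2 _ hNmono (Set.subset_insert _ _)
    rw [← hNA]
    exact Set.mem_insert _ _
  -- limits of distances to zeros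
  have hlim : ∀ z : H, (z, 0) ∈ A →
      ∃ ℓ : ℝ, Tendsto (fun t => ‖x t - z‖ ^ 2) atTop (𝓝 ℓ) := by
    intro z hz
    set ψ : ℝ → ℝ := fun t => ‖x (max t 0) - z‖ ^ 2 with hψ
    have hanti : Antitone ψ := by
      intro s t hst
      have := hdec z hz (max s 0) (max t 0) (le_max_right _ _)
        (max_le_max hst le_rfl)
      exact pow_le_pow_left₀ (norm_nonneg _) this 2
    have hbdd : BddBelow (Set.range ψ) := ⟨0, by rintro r ⟨t, rfl⟩; positivity⟩
    refine ⟨⨅ t, ψ t, ?_⟩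
    have h1 := tendsto_atTop_ciInf hanti hbdd
    refine h1.congr' ?_
    filter_upwards [Filter.eventually_ge_atTop (0:ℝ)] with t ht
    rw [hψ]
    simp [max_eq_left ht]
  -- uniqueness of weak cluster points
  have huniq : ∀ w₁ w₂ : H,
      ClusterPt (StrongDual.toWeakDual (InnerProductSpace.toDual ℝ H w₁))
        (Filter.map Φ atTop) →
      ClusterPt (StrongDual.toWeakDual (InnerProductSpace.toDual ℝ H w₂))
        (Filter.map Φ atTop) → w₁ = w₂ := by
    intro w₁ w₂ hw₁ hw₂
    obtain ⟨ℓ₁, hℓ₁⟩ := hlim w₁ (hzero w₁ hw₁)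
    obtain ⟨ℓ₂, hℓ₂⟩ := hlim w₂ (hzero w₂ hw₂)
    set w : H := w₁ - w₂ with hwdef
    set L : ℝ := (ℓ₂ - ℓ₁ + ‖w₁‖ ^ 2 - ‖w₂‖ ^ 2) / 2 with hLdef
    have hgt : Tendsto (fun t => (⟪x t, w⟫ : ℝ)) atTop (𝓝 L) := by
      have hcomb : Tendsto
          (fun t => (‖x t - w₂‖ ^ 2 - ‖x t - w₁‖ ^ 2 + ‖w₁‖ ^ 2 - ‖w₂‖ ^ 2) / 2) atTop
          (𝓝 ((ℓ₂ - ℓ₁ + ‖w₁‖ ^ 2 - ‖w₂‖ ^ 2) / 2)) :=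
        (((hℓ₂.sub hℓ₁).add tendsto_const_nhds).sub tendsto_const_nhds).div_const 2
      refine Tendsto.congr (fun t => ?_) hcomb
      rw [hwdef, inner_sub_right, norm_sub_sq_real, norm_sub_sq_real]
      ring
    have hintw : ∀ T : ℝ, IntegrableOn (fun s => (⟪x s, w⟫ : ℝ)) (Ioc 0 T) := by
      intro T
      refine ((hxInt 0 T le_rfl).norm.mul_const ‖w‖).mono'
        ((hxInt 0 T le_rfl).aestronglyMeasurable.inner aestronglyMeasurable_const) ?_
      filter_upwards with s
      exact norm_inner_le_norm _ _
    have hces := bb_cesaro hintw hgt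
    have hσw : Tendsto (fun t => (⟪σ t, w⟫ : ℝ)) atTop (𝓝 L) := by
      refine hces.congr' ?_
      filter_upwards [Filter.eventually_gt_atTop (0:ℝ)] with t ht
      rw [hσeq t ht, real_inner_smul_left]
      congr 1
      have h1 : ∀ s, (⟪x s, w⟫ : ℝ) = (innerSL ℝ w) (x s) := fun s => by
        simp [real_inner_comm]
      simp_rw [h1]
      rw [ContinuousLinearMap.integral_comp_comm _ (hxInt 0 t le_rfl)]
      simp [real_inner_comm]
    have hval : ∀ wi : H,
        ClusterPt (StrongDual.toWeakDual (InnerProductSpace.toDual ℝ H wi))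
          (Filter.map Φ atTop) → (⟪wi, w⟫ : ℝ) = L := by
      intro wi hwi
      have h1 := heval wi atTop hwi w
      have h2 : Filter.map (fun t => (⟪σ t, w⟫ : ℝ)) atTop ≤ 𝓝 L := hσw
      exact eq_of_nhds_neBot (h1.mono h2)
    have e1 := hval w₁ hw₁
    have e2 := hval w₂ hw₂
    have e3 : (⟪w₁ - w₂, w⟫ : ℝ) = 0 := by rw [inner_sub_left]; linarith
    rw [← hwdef] at e3
    have e4 : w = 0 := by
      have := inner_self_eq_zero.mp (by exact_mod_cast e3)
      exact this
    rw [hwdef] at e4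
    exact sub_eq_zero.mp e4
  -- conclusion
  obtain ⟨w, hw⟩ := hclus atTop le_rfl atTop_neBot
  refine ⟨w, hzero w hw, ?_⟩
  intro y
  show Tendsto (fun t => (⟪σ t, y⟫ : ℝ)) atTop (𝓝 (⟪w, y⟫ : ℝ))
  by_contra hcon
  rw [Metric.tendsto_nhds] at hcon
  push_neg at hcon
  obtain ⟨ε, hε, hfreq⟩ := hcon
  simp only [← not_lt] at hfreq
  have hFne : (atTop ⊓ 𝓟 {t : ℝ | ¬ dist (⟪σ t, y⟫ : ℝ) (⟪w, y⟫ : ℝ) < ε}).NeBot :=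
    Filter.frequently_iff_neBot.mp hfreq
  set F : Filter ℝ := atTop ⊓ 𝓟 {t : ℝ | ¬ dist (⟪σ t, y⟫ : ℝ) (⟪w, y⟫ : ℝ) < ε} with hF
  obtain ⟨w', hw'⟩ := hclus F inf_le_left hFne
  have hw'' : ClusterPt (StrongDual.toWeakDual (InnerProductSpace.toDual ℝ H w'))
      (Filter.map Φ atTop) := hw'.mono (Filter.map_mono inf_le_left)
  have hww' : w = w' := huniq w w' hw hw''
  subst hww'
  have h1 := heval w F hw' y
  have h2 := (mapClusterPt_iff_frequently.mp (mapClusterPt_def.mpr h1)) _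
    (Metric.ball_mem_nhds (⟪w, y⟫ : ℝ) hε)
  have h3 : ∀ᶠ t in F, ¬ dist (⟪σ t, y⟫ : ℝ) (⟪w, y⟫ : ℝ) < ε :=
    Filter.eventually_inf_principal.mpr (Filter.Eventually.of_forall (fun t ht => ht))
  obtain ⟨t, ht1, ht2⟩ := (h2.and_eventually h3).exists
  exact ht2 (Metric.mem_ball.mp ht1)
end

section
/- Let A, B : H ⇉ H be monotone operators. Then: (i) for every (z,p) ∈ H × H, G_{A+B}(z,p) ≤ inf_{q ∈ H} [G_A(z,q) + G_B(z,p−q)]; (ii) for every (z,p) ∈ H × H and every λ > 0, G_{λA}(z,p) = λ G_A(z, p/λ); (iii) for every z in the closure of dom A and every p ∈ N_{cl(dom A)}(z), G_A(z,p) ≤ G_A(z,0). -/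
open MeasureTheory Set Filter Topology ENNReal RealInnerProductSpace

variable {H : Type*} [NormedAddCommGroup H] [InnerProductSpace ℝ H] [CompleteSpace H]

/-- Calculus rules for the Brézis–Haraux function:
(i) subadditivity with respect to the sum of operators,
(ii) behavior under positive scaling,
(iii) monotonicity with respect to normal directions to the closure of the domain. -/
theorem brezisHaraux_calculus
    (A B : Set (H × H)) (hA : MonotoneGraph A) (hB : MonotoneGraph B) :
    (∀ z p : H, BH (GraphSum A B) z p ≤ ⨅ q : H, (BH A z q + BH B z (p - q))) ∧
    (∀ z p : H, ∀ lam : ℝ, 0 < lam →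
      BH (SmulGraph lam A) z p = (lam : EReal) * BH A z (lam⁻¹ • p)) ∧
    (∀ z ∈ closure (GraphDom A), ∀ p : H,
      (∀ y ∈ closure (GraphDom A), (⟪p, y - z⟫ : ℝ) ≤ 0) →
      BH A z p ≤ BH A z 0) := by
  refine ⟨?_, ?_, ?_⟩
  · intro z p
    refine le_iInf fun q => iSup₂_le fun w hw => ?_
    obtain ⟨u, v, hu, hv, hw2⟩ := hw
    have key : (⟪z - w.1, w.2 - p⟫ : ℝ) = ⟪z - w.1, u - q⟫ + ⟪z - w.1, v - (p - q)⟫ := by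
      rw [← inner_add_right, hw2]
      congr 1
      abel
    rw [key, EReal.coe_add]
    exact add_le_add (le_iSup₂_of_le (w.1, u) hu le_rfl)
      (le_iSup₂_of_le (w.1, v) hv le_rfl)
  · intro z p lam hlam
    have hlam' : (0 : EReal) < (lam : EReal) := by exact_mod_cast hlam
    have hlamt : (lam : EReal) ≠ ⊤ := EReal.coe_ne_top lam
    have key : ∀ u : H, lam • u - p = lam • (u - lam⁻¹ • p) := fun u => by
      rw [smul_sub, smul_inv_smul₀ (ne_of_gt hlam)]
    apply le_antisymm
    · refine iSup₂_le fun w hw => ?_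
      obtain ⟨u, hu, hw2⟩ := hw
      have : (⟪z - w.1, w.2 - p⟫ : ℝ) = lam * ⟪z - w.1, u - lam⁻¹ • p⟫ := by
        rw [hw2, key, real_inner_smul_right]
      rw [this, EReal.coe_mul]
      exact mul_le_mul_of_nonneg_left (le_iSup₂_of_le (w.1, u) hu le_rfl) hlam'.le
    · rw [mul_comm, ← EReal.le_div_iff_mul_le hlam' hlamt]
      refine iSup₂_le fun w hw => ?_
      rw [EReal.le_div_iff_mul_le hlam' hlamt]
      have hmem : (w.1, lam • w.2) ∈ SmulGraph lam A := ⟨w.2, hw, rfl⟩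
      have : (⟪z - w.1, w.2 - lam⁻¹ • p⟫ : EReal) * (lam : EReal)
          = ((⟪z - w.1, lam • w.2 - p⟫ : ℝ) : EReal) := by
        rw [← EReal.coe_mul, key, real_inner_smul_right]
        ring_nf
      rw [this]
      exact le_iSup₂_of_le (w.1, lam • w.2) hmem le_rfl
  · intro z hz p hp
    refine iSup₂_le fun w hw => ?_
    have hdom : w.1 ∈ closure (GraphDom A) := subset_closure ⟨w.2, hw⟩
    have h1 : (⟪z - w.1, w.2 - p⟫ : ℝ) ≤ ⟪z - w.1, w.2 - 0⟫ := by
      have h2 : (⟪p, w.1 - z⟫ : ℝ) ≤ 0 := hp w.1 hdom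
      have : (⟪z - w.1, w.2 - p⟫ : ℝ) = ⟪z - w.1, w.2 - 0⟫ + ⟪p, w.1 - z⟫ := by
        rw [sub_zero, inner_sub_right]
        have : (⟪z - w.1, p⟫ : ℝ) = -⟪p, w.1 - z⟫ := by
          rw [real_inner_comm, ← inner_neg_right, neg_sub]
        rw [this]; ring
      linarith
    exact le_trans (EReal.coe_le_coe_iff.mpr h1) (le_iSup₂_of_le w hw le_rfl)
end

section
/- Let A, B : H ⇉ H be maximal monotone operators such that A + N_{cl(dom B)} is maximal monotone and (A + N_{cl(dom B)})^{-1}(0) ≠ ∅. Let ε : [0,+∞) → [0,+∞) be a measurable map such that A + ε(t)B is maximal monotone for every t ≥ 0 and ∫₀^{+∞} ε(t) dt < +∞. Suppose that G_B(z,0) < +∞ for every z ∈ dom A ∩ cl(dom B). Then for every strong global solution x(·) of ẋ(t) + A(x(t)) + ε(t)B(x(t)) ∋ 0 there exists x_∞ ∈ (A + N_{cl(dom B)})^{-1}(0) such that (1/t)∫₀ᵗ x(s) ds converges weakly to x_∞ in H as t → +∞. -/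
open MeasureTheory Set Filter Topology ENNReal RealInnerProductSpace

variable {H : Type*} [NormedAddCommGroup H] [InnerProductSpace ℝ H] [CompleteSpace H]

section Aux

lemma key_sq_identity (f : ℝ → H) (s t : ℝ) (hst : s ≤ t)
    (hf : IntegrableOn f (Ioc s t)) :
    ‖∫ r in Ioc s t, f r‖ ^ 2 =
      2 * ∫ r in Ioc s t, (⟪f r, ∫ τ in Ioc s r, f τ⟫ : ℝ) := by
  set μ := volume.restrict (Ioc s t) with hμ
  have hfμ : Integrable f μ := hf
  set K : ℝ × ℝ → ℝ := fun p => (⟪f p.1, f p.2⟫ : ℝ) with hK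
  have hmK : AEStronglyMeasurable K (μ.prod μ) := by
    exact (hfμ.aestronglyMeasurable.comp_fst.inner hfμ.aestronglyMeasurable.comp_snd)
  have hKint : Integrable K (μ.prod μ) := by
    refine Integrable.mono' (hfμ.norm.mul_prod hfμ.norm) hmK ?_
    refine Eventually.of_forall fun p => ?_
    simpa [K] using abs_real_inner_le_norm (f p.1) (f p.2)
  set g1 : ℝ × ℝ → ℝ := fun p => if p.2 ≤ p.1 then K p else 0 with hg1def
  set g2 : ℝ × ℝ → ℝ := fun p => if p.1 ≤ p.2 then K p else 0 with hg2def
  have hD1 : MeasurableSet {p : ℝ × ℝ | p.2 ≤ p.1} := measurableSet_le measurable_snd measurable_fst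
  have hD2 : MeasurableSet {p : ℝ × ℝ | p.1 ≤ p.2} := measurableSet_le measurable_fst measurable_snd
  have hg1eq : g1 = {p : ℝ × ℝ | p.2 ≤ p.1}.indicator K := by
    funext p; by_cases h : p.2 ≤ p.1 <;> simp [g1, indicator, h]
  have hg2eq : g2 = {p : ℝ × ℝ | p.1 ≤ p.2}.indicator K := by
    funext p; by_cases h : p.1 ≤ p.2 <;> simp [g2, indicator, h]
  have hg1int : Integrable g1 (μ.prod μ) := by rw [hg1eq]; exact hKint.indicator hD1
  have hg2int : Integrable g2 (μ.prod μ) := by rw [hg2eq]; exact hKint.indicator hD2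
  -- step A : total double integral equals ‖I‖²
  set I := ∫ r in Ioc s t, f r with hI
  have hA : ∫ r, (∫ τ, K (r, τ) ∂μ) ∂μ = ‖I‖ ^ 2 := by
    have h1 : ∀ r : ℝ, ∫ τ, K (r, τ) ∂μ = ⟪f r, I⟫ := by
      intro r; exact integral_inner hfμ (f r)
    rw [integral_congr_ae (Eventually.of_forall h1)]
    have h2 : ∀ r : ℝ, (⟪f r, I⟫ : ℝ) = ⟪I, f r⟫ := fun r => real_inner_comm _ _
    rw [integral_congr_ae (Eventually.of_forall h2), integral_inner hfμ I,
      real_inner_self_eq_norm_sq]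
  -- step B : sum splitting
  have hB : (∫ r, (∫ τ, g1 (r, τ) ∂μ) ∂μ) + (∫ r, (∫ τ, g2 (r, τ) ∂μ) ∂μ)
      = ∫ r, (∫ τ, K (r, τ) ∂μ) ∂μ := by
    rw [← integral_add (hg1int.integral_prod_left) (hg2int.integral_prod_left)]
    refine integral_congr_ae ?_
    filter_upwards [hg1int.prod_right_ae, hg2int.prod_right_ae, hKint.prod_right_ae]
      with r h1 h2 hK'
    rw [← integral_add h1 h2]
    have hsing : μ {r} = 0 := by
      rw [hμ, Measure.restrict_apply (measurableSet_singleton r)]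
      exact measure_mono_null inter_subset_left (measure_singleton r)
    have : (fun τ => g1 (r, τ) + g2 (r, τ)) =ᵐ[μ] fun τ => K (r, τ) := by
      have hne : ∀ᵐ τ ∂μ, τ ≠ r := by
        rw [ae_iff]; simpa using measure_mono_null (fun τ hτ => by simpa using hτ) hsing
      filter_upwards [hne] with τ hτ
      rcases lt_trichotomy τ r with h | h | h
      · simp [g1, g2, h.le, not_le.mpr h]
      · exact absurd h hτ
      · simp [g1, g2, h.le, not_le.mpr h]
    rw [integral_congr_ae this]
  -- step C : swap symmetry  J2 = J1
  have hC : (∫ r, (∫ τ, g2 (r, τ) ∂μ) ∂μ) = ∫ r, (∫ τ, g1 (r, τ) ∂μ) ∂μ := by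
    have hswap : (∫ r, (∫ τ, g2 (r, τ) ∂μ) ∂μ) = ∫ τ, (∫ r, g2 (r, τ) ∂μ) ∂μ :=
      integral_integral_swap (by exact hg2int)
    rw [hswap]
    refine integral_congr_ae (Eventually.of_forall fun a => ?_)
    refine integral_congr_ae (Eventually.of_forall fun b => ?_)
    simp only [g1, g2, K]
    by_cases h : b ≤ a <;> simp [h, real_inner_comm]
  -- step D : inner integral of g1 is the primitive
  have hD : (∫ r, (∫ τ, g1 (r, τ) ∂μ) ∂μ)
      = ∫ r in Ioc s t, (⟪f r, ∫ τ in Ioc s r, f τ⟫ : ℝ) := by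
    refine integral_congr_ae ?_
    filter_upwards [ae_restrict_mem measurableSet_Ioc] with r hr
    have h1 : (fun τ => g1 (r, τ)) = (Iic r).indicator (fun τ => K (r, τ)) := by
      funext τ; by_cases h : τ ≤ r <;> simp [g1, indicator, h]
    rw [h1, integral_indicator measurableSet_Iic]
    have h2 : μ.restrict (Iic r) = volume.restrict (Ioc s r) := by
      rw [hμ, Measure.restrict_restrict measurableSet_Iic]
      congr 1
      rw [inter_comm, Ioc_inter_Iic, min_eq_right hr.2]
    rw [h2]
    exact integral_inner (hf.mono_set (Ioc_subset_Ioc_right hr.2)) (f r)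
  have := hB
  rw [hC, hD] at this
  rw [← hA, ← this]; ring
lemma primitive_shift (f : ℝ → H) (x : ℝ → H)
    (hloc : ∀ T : ℝ, IntegrableOn f (Icc 0 T))
    (hxint : ∀ t : ℝ, 0 ≤ t → x t = x 0 + ∫ s in (0:ℝ)..t, f s)
    {s r : ℝ} (h0s : 0 ≤ s) (hsr : s ≤ r) :
    x r = x s + ∫ τ in Ioc s r, f τ := by
  have h1 : IntervalIntegrable f volume 0 s := by
    apply IntegrableOn.intervalIntegrable
    rw [uIcc_of_le h0s]; exact hloc s
  have h2 : IntervalIntegrable f volume s r := by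
    apply IntegrableOn.intervalIntegrable
    rw [uIcc_of_le hsr]
    exact (hloc r).mono_set (Icc_subset_Icc_left h0s)
  have := intervalIntegral.integral_add_adjacent_intervals h1 h2
  rw [hxint r (h0s.trans hsr), hxint s h0s, ← this,
    intervalIntegral.integral_of_le hsr]
  abel

lemma energy_identity (f : ℝ → H) (x : ℝ → H)
    (hloc : ∀ T : ℝ, IntegrableOn f (Icc 0 T))
    (hxint : ∀ t : ℝ, 0 ≤ t → x t = x 0 + ∫ s in (0:ℝ)..t, f s)
    (y : H) {s t : ℝ} (h0s : 0 ≤ s) (hst : s ≤ t) :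
    ‖x t - y‖ ^ 2 - ‖x s - y‖ ^ 2 = 2 * ∫ r in Ioc s t, (⟪f r, x r - y⟫ : ℝ) := by
  have hfIoc : IntegrableOn f (Ioc s t) :=
    (hloc t).mono_set fun r hr => ⟨h0s.trans hr.1.le, hr.2⟩
  set u := x s - y with hu
  set I := ∫ r in Ioc s t, f r with hI
  set F : ℝ → H := fun r => ∫ τ in Ioc s r, f τ with hF
  have hxr : ∀ r ∈ Ioc s t, x r - y = u + F r := by
    intro r hr
    rw [primitive_shift f x hloc hxint h0s hr.1.le, hu]
    abel
  have hxt : x t - y = u + I := by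
    rw [primitive_shift f x hloc hxint h0s hst, hu]; abel
  -- integrability of the two pieces
  have hint1 : Integrable (fun r => (⟪f r, u⟫ : ℝ)) (volume.restrict (Ioc s t)) := by
    have := hfIoc.const_inner (𝕜 := ℝ) u
    refine this.congr ?_
    exact Eventually.of_forall fun r => real_inner_comm _ _
  have hCF : ∀ r, r ≤ t → ‖F r‖ ≤ ∫ τ in Ioc s t, ‖f τ‖ := by
    intro r h
    calc ‖F r‖ ≤ ∫ τ in Ioc s r, ‖f τ‖ := norm_integral_le_integral_norm _
    _ ≤ ∫ τ in Ioc s t, ‖f τ‖ :=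
        setIntegral_mono_set hfIoc.norm
          (Eventually.of_forall fun τ => norm_nonneg _)
          (HasSubset.Subset.eventuallyLE (Ioc_subset_Ioc_right h))
  have hFmeas : AEStronglyMeasurable F (volume.restrict (Ioc s t)) := by
    have hcont : ContinuousOn F (Icc s t) := intervalIntegral.continuousOn_primitive
      ((hloc t).mono_set (Icc_subset_Icc_left h0s))
    exact (hcont.mono Ioc_subset_Icc_self).aestronglyMeasurable measurableSet_Ioc
  have hint2 : Integrable (fun r => (⟪f r, F r⟫ : ℝ)) (volume.restrict (Ioc s t)) := by
    refine Integrable.mono' (hfIoc.norm.mul_const (∫ τ in Ioc s t, ‖f τ‖))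
      (hfIoc.aestronglyMeasurable.inner hFmeas) ?_
    filter_upwards [ae_restrict_mem measurableSet_Ioc] with r hr
    calc ‖(⟪f r, F r⟫ : ℝ)‖ ≤ ‖f r‖ * ‖F r‖ := by
          simpa using abs_real_inner_le_norm (f r) (F r)
    _ ≤ ‖f r‖ * ∫ τ in Ioc s t, ‖f τ‖ :=
        mul_le_mul_of_nonneg_left (hCF r hr.2) (norm_nonneg _)
  have hsplit : ∫ r in Ioc s t, (⟪f r, x r - y⟫ : ℝ)
      = (∫ r in Ioc s t, (⟪f r, u⟫ : ℝ)) + ∫ r in Ioc s t, (⟪f r, F r⟫ : ℝ) := by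
    rw [← integral_add hint1 hint2]
    refine integral_congr_ae ?_
    filter_upwards [ae_restrict_mem measurableSet_Ioc] with r hr
    rw [hxr r hr, inner_add_right]
  have h1 : ∫ r in Ioc s t, (⟪f r, u⟫ : ℝ) = ⟪u, I⟫ := by
    have := integral_inner (𝕜 := ℝ) hfIoc u
    rw [← this]
    exact integral_congr_ae (Eventually.of_forall fun r => real_inner_comm _ _)
  have h2 : ‖I‖ ^ 2 = 2 * ∫ r in Ioc s t, (⟪f r, F r⟫ : ℝ) :=
    key_sq_identity f s t hst hfIoc
  rw [hsplit, h1, hxt, norm_add_sq_real]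
  linarith [h2]


lemma traj_cont (f x : ℝ → H) (hloc : ∀ T : ℝ, IntegrableOn f (Icc 0 T))
    (hxint : ∀ t : ℝ, 0 ≤ t → x t = x 0 + ∫ s in (0:ℝ)..t, f s) :
    ContinuousOn x (Ici 0) := by
  intro r hr
  have hr0 : (0:ℝ) ≤ r := hr
  have hT : ContinuousOn (fun t => x 0 + ∫ τ in Ioc 0 t, f τ) (Icc 0 (r+1)) :=
    continuous_const.continuousOn.add (intervalIntegral.continuousOn_primitive (hloc (r+1)))
  have heq : EqOn (fun t => x 0 + ∫ τ in Ioc 0 t, f τ) x (Icc 0 (r+1)) := fun t ht => by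
    rw [hxint t ht.1, intervalIntegral.integral_of_le ht.1]
  have h1 : ContinuousWithinAt x (Icc 0 (r+1)) r :=
    (hT.congr heq.symm).continuousWithinAt ⟨hr0, by linarith⟩
  refine h1.mono_of_mem_nhdsWithin ?_
  refine mem_nhdsWithin.mpr ⟨Iio (r+1), isOpen_Iio, by simp, ?_⟩
  rintro y ⟨hy1, hy2⟩
  exact ⟨hy2, le_of_lt hy1⟩

lemma eps_int (ε : ℝ → ℝ) (hεmeas : Measurable ε) (hεnonneg : ∀ t : ℝ, 0 ≤ t → 0 ≤ ε t)
    (hεint : ∫⁻ t in Ici (0:ℝ), ENNReal.ofReal (ε t) < ⊤) :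
    IntegrableOn ε (Ioi 0) := by
  refine ⟨hεmeas.aestronglyMeasurable.restrict, ?_⟩
  rw [HasFiniteIntegral]
  have h1 : ∫⁻ a in Ioi (0:ℝ), ‖ε a‖ₑ = ∫⁻ a in Ioi (0:ℝ), ENNReal.ofReal (ε a) := by
    refine lintegral_congr_ae ?_
    filter_upwards [ae_restrict_mem measurableSet_Ioi] with a ha
    rw [← Real.enorm_eq_ofReal (hεnonneg a ha.le)]
  rw [h1]
  refine lt_of_le_of_lt ?_ hεint
  exact lintegral_mono_set (fun a ha => show (0:ℝ) ≤ a from le_of_lt ha)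

lemma tail_tendsto (ε : ℝ → ℝ) (hεi : IntegrableOn ε (Ioi 0))
    (hεnonneg : ∀ t : ℝ, 0 ≤ t → 0 ≤ ε t) :
    Tendsto (fun t => ∫ r in Ioi t, ε r) atTop (𝓝 0) := by
  have h1 : Tendsto (fun t : ℝ => ∫ r in (0:ℝ)..t, ε r) atTop (𝓝 (∫ r in Ioi (0:ℝ), ε r)) :=
    intervalIntegral_tendsto_integral_Ioi 0 hεi tendsto_id
  have h2 : ∀ᶠ t in (atTop : Filter ℝ), ∫ r in Ioi t, ε r
      = (∫ r in Ioi (0:ℝ), ε r) - ∫ r in (0:ℝ)..t, ε r := by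
    filter_upwards [eventually_ge_atTop (0:ℝ)] with t ht
    rw [intervalIntegral.integral_of_le ht]
    have hsplit : Ioc 0 t ∪ Ioi t = Ioi (0:ℝ) := Ioc_union_Ioi_eq_Ioi ht
    have := setIntegral_union (Ioc_disjoint_Ioi le_rfl) measurableSet_Ioi
      (hεi.mono_set (fun a ha => ha.1)) (hεi.mono_set (fun a (ha : a ∈ Ioi t) => lt_of_le_of_lt ht ha))
    rw [hsplit] at this
    rw [this]; ring
  rw [show (0:ℝ) = (∫ r in Ioi (0:ℝ), ε r) - (∫ r in Ioi (0:ℝ), ε r) by ring]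
  exact Tendsto.congr' (h2.mono fun t ht => ht.symm) (tendsto_const_nhds.sub h1)

lemma BH_bound (B : Set (H × H)) (hBne : B.Nonempty) (y : H) (hfin : BH B y 0 ≠ ⊤) :
    ∃ G : ℝ, 0 ≤ G ∧ ∀ q ∈ B, (⟪y - q.1, q.2⟫ : ℝ) ≤ G := by
  refine ⟨max (BH B y 0).toReal 0, le_max_right _ _, fun q hq => ?_⟩
  have h1 : ((⟪y - q.1, q.2 - 0⟫ : ℝ) : EReal) ≤ BH B y 0 := by
    rw [BH]
    exact le_biSup (f := fun q : H × H => ((⟪y - q.1, q.2 - 0⟫ : ℝ) : EReal)) hq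
  rw [sub_zero] at h1
  have h2 : (⟪y - q.1, q.2⟫ : ℝ) ≤ (BH B y 0).toReal := by
    have hb : BH B y 0 ≠ ⊥ := fun hbot => by
      rw [hbot] at h1; exact absurd h1 (by simp [EReal.coe_ne_bot])
    have := EReal.toReal_le_toReal h1 (EReal.coe_ne_bot _) hfin
    simpa using this
  exact h2.trans (le_max_left _ _)

lemma diff_ineq (A B : Set (H × H)) (hA : MonotoneGraph A)
    (ε : ℝ → ℝ) (hεnonneg : ∀ t : ℝ, 0 ≤ t → 0 ≤ ε t)
    (x x' : ℝ → H)
    (hsol : ∀ᵐ t ∂(volume.restrict (Ioi (0:ℝ))), (x t, -x' t) ∈ ScaledSum A B (ε t))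
    (y w : H) (hyw : (y, w) ∈ GraphSum A (NormalConeGraph (closure (GraphDom B))))
    (G : ℝ) (hG : ∀ q ∈ B, (⟪y - q.1, q.2⟫ : ℝ) ≤ G) :
    ∀ᵐ r ∂(volume.restrict (Ioi (0:ℝ))),
      (⟪x' r, x r - y⟫ : ℝ) ≤ ⟪y - x r, w⟫ + ε r * G := by
  obtain ⟨u, p, huA, hpN, hw⟩ := hyw
  filter_upwards [hsol, ae_restrict_mem measurableSet_Ioi] with r hsr hr
  obtain ⟨a, b, haA, hbB, heq⟩ := hsr
  have hxv : x' r = -(a + ε r • b) := by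
    rw [← heq]; simp
  have hmono : (0:ℝ) ≤ ⟪x r - y, a - u⟫ := hA _ haA _ huA
  have hxC : x r ∈ closure (GraphDom B) := subset_closure ⟨b, hbB⟩
  have hp : (⟪p, x r - y⟫ : ℝ) ≤ 0 := hpN.2 (x r) hxC
  have hGb : (⟪y - x r, b⟫ : ℝ) ≤ G := hG _ hbB
  have hε : 0 ≤ ε r := hεnonneg r hr.le
  have e1 : (⟪x' r, x r - y⟫ : ℝ) = -⟪a, x r - y⟫ - ε r * ⟪b, x r - y⟫ := by
    rw [hxv, inner_neg_left, inner_add_left, real_inner_smul_left]; ring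
  have e2 : (⟪x r - y, a - u⟫ : ℝ) = ⟪a, x r - y⟫ - ⟪u, x r - y⟫ := by
    rw [inner_sub_right, real_inner_comm (x r - y) a, real_inner_comm (x r - y) u]
  have e3 : (⟪u, x r - y⟫ : ℝ) = ⟪w, x r - y⟫ - ⟪p, x r - y⟫ := by
    rw [show w = u + p from hw, inner_add_left]; ring
  have e4 : (⟪y - x r, w⟫ : ℝ) = -⟪w, x r - y⟫ := by
    rw [show y - x r = -(x r - y) by abel, inner_neg_left, real_inner_comm]
  have e5 : (⟪y - x r, b⟫ : ℝ) = -⟪b, x r - y⟫ := by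
    rw [show y - x r = -(x r - y) by abel, inner_neg_left, real_inner_comm]
  have e6 : ε r * ⟪y - x r, b⟫ ≤ ε r * G := mul_le_mul_of_nonneg_left hGb hε
  rw [e5] at e6
  rw [e1, e4]
  rw [e2, e3] at hmono
  linarith

lemma xw_int (x : ℝ → H) (hcont : ContinuousOn x (Ici 0)) (y w : H)
    {s t : ℝ} (h0s : 0 ≤ s) :
    IntegrableOn (fun r => (⟪y - x r, w⟫ : ℝ)) (Ioc s t) := by
  have h1 : ContinuousOn (fun r => (⟪y - x r, w⟫ : ℝ)) (Icc s t) := by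
    apply ContinuousOn.inner
    · exact continuous_const.continuousOn.sub
        (hcont.mono (fun r hr => h0s.trans hr.1))
    · exact continuous_const.continuousOn
  exact (h1.integrableOn_Icc).mono_set Ioc_subset_Icc_self

lemma energy_ineq (f x : ℝ → H)
    (hloc : ∀ T : ℝ, IntegrableOn f (Icc 0 T))
    (hxint : ∀ t : ℝ, 0 ≤ t → x t = x 0 + ∫ s in (0:ℝ)..t, f s)
    (ε : ℝ → ℝ) (hεi : IntegrableOn ε (Ioi 0))
    (y w : H) (G : ℝ)
    (hae : ∀ᵐ r ∂(volume.restrict (Ioi (0:ℝ))),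
      (⟪f r, x r - y⟫ : ℝ) ≤ ⟪y - x r, w⟫ + ε r * G)
    {s t : ℝ} (h0s : 0 ≤ s) (hst : s ≤ t) :
    ‖x t - y‖ ^ 2 ≤ ‖x s - y‖ ^ 2 +
      2 * ((∫ r in Ioc s t, (⟪y - x r, w⟫ : ℝ)) + G * ∫ r in Ioc s t, ε r) := by
  have hcont : ContinuousOn x (Ici 0) := traj_cont f x hloc hxint
  have hfIoc : IntegrableOn f (Ioc s t) :=
    (hloc t).mono_set fun r hr => ⟨h0s.trans hr.1.le, hr.2⟩
  have hsub : Ioc s t ⊆ Ioi (0:ℝ) := fun r hr => lt_of_le_of_lt h0s hr.1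
  have hεIoc : IntegrableOn ε (Ioc s t) := hεi.mono_set hsub
  -- integrability of LHS integrand
  have hxbd : ∃ Cx : ℝ, ∀ r ∈ Ioc s t, ‖x r - y‖ ≤ Cx := by
    obtain ⟨Cx, hCx⟩ := (isCompact_Icc (a := s) (b := t)).exists_bound_of_continuousOn
      ((hcont.mono (fun r hr => h0s.trans hr.1)).sub continuous_const.continuousOn)
    exact ⟨Cx, fun r hr => hCx r (Ioc_subset_Icc_self hr)⟩
  obtain ⟨Cx, hCx⟩ := hxbd
  have hxmeas : AEStronglyMeasurable (fun r => x r - y) (volume.restrict (Ioc s t)) :=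
    ((hcont.mono (fun r (hr : r ∈ Ioc s t) => h0s.trans hr.1.le)).sub
      continuous_const.continuousOn).aestronglyMeasurable measurableSet_Ioc
  have hlint : IntegrableOn (fun r => (⟪f r, x r - y⟫ : ℝ)) (Ioc s t) := by
    refine Integrable.mono' (hfIoc.norm.mul_const Cx)
      (hfIoc.aestronglyMeasurable.inner hxmeas) ?_
    filter_upwards [ae_restrict_mem measurableSet_Ioc] with r hr
    calc ‖(⟪f r, x r - y⟫ : ℝ)‖ ≤ ‖f r‖ * ‖x r - y‖ := by
          simpa using abs_real_inner_le_norm (f r) (x r - y)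
    _ ≤ ‖f r‖ * Cx := mul_le_mul_of_nonneg_left (hCx r hr) (norm_nonneg _)
  have hrint : IntegrableOn (fun r => (⟪y - x r, w⟫ : ℝ) + ε r * G) (Ioc s t) :=
    (xw_int x hcont y w h0s).add (hεIoc.mul_const G)
  have hmono : ∫ r in Ioc s t, (⟪f r, x r - y⟫ : ℝ)
      ≤ ∫ r in Ioc s t, ((⟪y - x r, w⟫ : ℝ) + ε r * G) := by
    refine integral_mono_ae hlint hrint ?_
    exact ae_restrict_of_ae_restrict_of_subset hsub hae
  have hid := energy_identity f x hloc hxint y h0s hst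
  have hsplit : ∫ r in Ioc s t, ((⟪y - x r, w⟫ : ℝ) + ε r * G)
      = (∫ r in Ioc s t, (⟪y - x r, w⟫ : ℝ)) + G * ∫ r in Ioc s t, ε r := by
    rw [integral_add (xw_int x hcont y w h0s) (hεIoc.mul_const G)]
    rw [integral_mul_const]; ring
  rw [hsplit] at hmono
  linarith

lemma eps_tail_nonneg (ε : ℝ → ℝ) (hεnonneg : ∀ t : ℝ, 0 ≤ t → 0 ≤ ε t) {t : ℝ}
    (ht : 0 ≤ t) : 0 ≤ ∫ r in Ioi t, ε r :=
  setIntegral_nonneg measurableSet_Ioi fun r hr => hεnonneg r (ht.trans hr.le)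

lemma eps_split (ε : ℝ → ℝ) (hεi : IntegrableOn ε (Ioi 0)) {s u : ℝ}
    (h0s : 0 ≤ s) (hsu : s ≤ u) :
    ∫ r in Ioi s, ε r = (∫ r in Ioc s u, ε r) + ∫ r in Ioi u, ε r := by
  have h0u : 0 ≤ u := h0s.trans hsu
  have hsplit : Ioc s u ∪ Ioi u = Ioi s := Ioc_union_Ioi_eq_Ioi hsu
  have := setIntegral_union (Ioc_disjoint_Ioi le_rfl) measurableSet_Ioi
    (hεi.mono_set (fun a ha => lt_of_le_of_lt h0s ha.1))
    (hεi.mono_set (fun a (ha : a ∈ Ioi u) => lt_of_le_of_lt h0u ha))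
  rw [hsplit] at this
  exact this

lemma hconv (f x : ℝ → H)
    (hloc : ∀ T : ℝ, IntegrableOn f (Icc 0 T))
    (hxint : ∀ t : ℝ, 0 ≤ t → x t = x 0 + ∫ s in (0:ℝ)..t, f s)
    (ε : ℝ → ℝ) (hεi : IntegrableOn ε (Ioi 0)) (hεnonneg : ∀ t : ℝ, 0 ≤ t → 0 ≤ ε t)
    (z : H) (G : ℝ) (hG0 : 0 ≤ G)
    (hae : ∀ᵐ r ∂(volume.restrict (Ioi (0:ℝ))),
      (⟪f r, x r - z⟫ : ℝ) ≤ ⟪z - x r, (0:H)⟫ + ε r * G) :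
    ∃ ℓ : ℝ, Tendsto (fun t => ‖x t - z‖ ^ 2) atTop (𝓝 ℓ) := by
  set φ : ℝ → ℝ := fun t => ‖x (max t 0) - z‖ ^ 2 + 2 * G * ∫ r in Ioi (max t 0), ε r
    with hφdef
  have hzero : ∀ s t : ℝ, (∫ r in Ioc s t, (⟪z - x r, (0:H)⟫ : ℝ)) = 0 := by
    intro s t
    have : ∀ r : ℝ, (⟪z - x r, (0:H)⟫ : ℝ) = 0 := fun r => inner_zero_right _
    simp [this]
  have hφanti : Antitone φ := by
    intro t₁ t₂ h
    have h0s : (0:ℝ) ≤ max t₁ 0 := le_max_right _ _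
    have hsu : max t₁ 0 ≤ max t₂ 0 := max_le_max h le_rfl
    have h1 := energy_ineq f x hloc hxint ε hεi z 0 G hae h0s hsu
    rw [hzero] at h1
    have h2 := eps_split ε hεi h0s hsu
    simp only [hφdef]
    nlinarith [h1, h2]
  have hφbdd : BddBelow (range φ) := by
    refine ⟨0, fun v hv => ?_⟩
    obtain ⟨t, rfl⟩ := hv
    have := eps_tail_nonneg ε hεnonneg (t := max t 0) (le_max_right _ _)
    positivity
  have hφtend : Tendsto φ atTop (𝓝 (⨅ t, φ t)) := tendsto_atTop_ciInf hφanti hφbdd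
  have htail : Tendsto (fun t => ∫ r in Ioi t, ε r) atTop (𝓝 0) :=
    tail_tendsto ε hεi hεnonneg
  refine ⟨(⨅ t, φ t) - 2 * G * 0, ?_⟩
  have : ∀ᶠ t in (atTop : Filter ℝ), ‖x t - z‖ ^ 2 = φ t - 2 * G * ∫ r in Ioi t, ε r := by
    filter_upwards [eventually_ge_atTop (0:ℝ)] with t ht
    simp only [hφdef, max_eq_left ht]
    ring
  exact Tendsto.congr' (this.mono fun t ht => ht.symm)
    (hφtend.sub ((tendsto_const_nhds.mul htail)))

lemma traj_bdd (f x : ℝ → H)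
    (hloc : ∀ T : ℝ, IntegrableOn f (Icc 0 T))
    (hxint : ∀ t : ℝ, 0 ≤ t → x t = x 0 + ∫ s in (0:ℝ)..t, f s)
    (ε : ℝ → ℝ) (hεi : IntegrableOn ε (Ioi 0)) (hεnonneg : ∀ t : ℝ, 0 ≤ t → 0 ≤ ε t)
    (z : H) (G : ℝ) (hG0 : 0 ≤ G)
    (hae : ∀ᵐ r ∂(volume.restrict (Ioi (0:ℝ))),
      (⟪f r, x r - z⟫ : ℝ) ≤ ⟪z - x r, (0:H)⟫ + ε r * G) :
    ∃ R : ℝ, 0 ≤ R ∧ ∀ t : ℝ, 0 ≤ t → ‖x t‖ ≤ R := by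
  set K := ‖x 0 - z‖ ^ 2 + 2 * G * ∫ r in Ioi (0:ℝ), ε r with hK
  have hKb : ∀ t : ℝ, 0 ≤ t → ‖x t - z‖ ^ 2 ≤ K := by
    intro t ht
    have h1 := energy_ineq f x hloc hxint ε hεi z 0 G hae le_rfl ht
    have hzero : (∫ r in Ioc 0 t, (⟪z - x r, (0:H)⟫ : ℝ)) = 0 := by
      have : ∀ r : ℝ, (⟪z - x r, (0:H)⟫ : ℝ) = 0 := fun r => inner_zero_right _
      simp [this]
    rw [hzero] at h1
    have h2 := eps_split ε hεi (le_refl (0:ℝ)) ht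
    have h3 := eps_tail_nonneg ε hεnonneg (t := t) ht
    nlinarith [h1, h2, h3]
  refine ⟨‖z‖ + Real.sqrt K, by positivity, fun t ht => ?_⟩
  have h4 : ‖x t - z‖ ≤ Real.sqrt K := by
    have := hKb t ht
    have h5 : ‖x t - z‖ = Real.sqrt (‖x t - z‖ ^ 2) := by
      rw [Real.sqrt_sq (norm_nonneg _)]
    rw [h5]
    exact Real.sqrt_le_sqrt this
  calc ‖x t‖ = ‖z + (x t - z)‖ := by rw [add_sub_cancel]
  _ ≤ ‖z‖ + ‖x t - z‖ := norm_add_le _ _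
  _ ≤ ‖z‖ + Real.sqrt K := by linarith

lemma cesaro (q : ℝ → ℝ) (hq : ∀ b : ℝ, IntegrableOn q (Ioc 0 b)) {L : ℝ}
    (hL : Tendsto q atTop (𝓝 L)) :
    Tendsto (fun t => t⁻¹ * ∫ r in Ioc 0 t, q r) atTop (𝓝 L) := by
  rw [Metric.tendsto_atTop]
  intro δ hδ
  obtain ⟨t₀', ht₀'⟩ := (Metric.tendsto_atTop.mp hL) (δ/4) (by linarith)
  set t₀ := max t₀' 0 with ht₀def
  have ht₀0 : (0:ℝ) ≤ t₀ := le_max_right _ _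
  have hq' : ∀ r ≥ t₀, |q r - L| ≤ δ/4 := fun r hr =>
    le_of_lt (by simpa [Real.dist_eq] using ht₀' r ((le_max_left _ _).trans hr))
  set A := |∫ r in Ioc 0 t₀, (q r - L)| with hA
  refine ⟨max (max t₀ 1) ((A + |L| * t₀ + 1) * (4/δ)), fun t ht => ?_⟩
  have ht1 : (1:ℝ) ≤ t := le_trans (le_trans (le_max_right _ _) (le_max_left _ _)) ht
  have ht0 : (0:ℝ) < t := by linarith
  have htt₀ : t₀ ≤ t := le_trans (le_trans (le_max_left _ _) (le_max_left _ _)) ht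
  have htA : (A + |L| * t₀ + 1) * (4/δ) ≤ t := le_trans (le_max_right _ _) ht
  -- decompose
  have hsub : Ioc t₀ t ⊆ Ioc 0 t := Ioc_subset_Ioc_left ht₀0
  have hqt : IntegrableOn q (Ioc 0 t) := hq t
  have hsplit : ∫ r in Ioc 0 t, (q r - L)
      = (∫ r in Ioc 0 t₀, (q r - L)) + ∫ r in Ioc t₀ t, (q r - L) := by
    have hu : Ioc 0 t₀ ∪ Ioc t₀ t = Ioc 0 t := Ioc_union_Ioc_eq_Ioc ht₀0 htt₀
    have := setIntegral_union (f := fun r => q r - L) (μ := volume)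
      (Ioc_disjoint_Ioc_of_le (a := 0) (d := t) (le_refl t₀))
      measurableSet_Ioc ((hq t₀).sub (integrableOn_const measure_Ioc_lt_top.ne))
      ((hqt.mono_set hsub).sub (integrableOn_const measure_Ioc_lt_top.ne))
    rw [hu] at this
    exact this
  have hbd2 : |∫ r in Ioc t₀ t, (q r - L)| ≤ (δ/4) * (t - t₀) := by
    have hle : ∀ r ∈ Ioc t₀ t, ‖q r - L‖ ≤ δ/4 := fun r hr => by
      rw [Real.norm_eq_abs]; exact hq' r hr.1.le
    have := norm_setIntegral_le_of_norm_le_const (μ := volume) (s := Ioc t₀ t)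
      measure_Ioc_lt_top hle
    rw [Real.norm_eq_abs] at this
    calc |∫ r in Ioc t₀ t, (q r - L)| ≤ (δ/4) * (volume (Ioc t₀ t)).toReal := this
    _ ≤ (δ/4) * (t - t₀) := by
        rw [Real.volume_Ioc, ENNReal.toReal_ofReal (by linarith)]
  have hiq : ∫ r in Ioc 0 t, (q r - L) = (∫ r in Ioc 0 t, q r) - t * L := by
    rw [integral_sub hqt (integrableOn_const measure_Ioc_lt_top.ne)]
    rw [setIntegral_const, measureReal_def, Real.volume_Ioc, ENNReal.toReal_ofReal (by linarith),
      smul_eq_mul]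
    ring
  have key : |(∫ r in Ioc 0 t, q r) - t * L| ≤ A + (δ/4) * (t - t₀) := by
    rw [← hiq, hsplit]
    exact (abs_add_le _ _).trans (by linarith [hbd2])
  rw [Real.dist_eq]
  have heq : t⁻¹ * (∫ r in Ioc 0 t, q r) - L = t⁻¹ * ((∫ r in Ioc 0 t, q r) - t * L) := by
    field_simp
  rw [heq, abs_mul, abs_of_pos (inv_pos.mpr ht0)]
  have h6 : t⁻¹ * |(∫ r in Ioc 0 t, q r) - t * L| ≤ t⁻¹ * (A + (δ/4) * (t - t₀)) := by
    exact mul_le_mul_of_nonneg_left key (le_of_lt (inv_pos.mpr ht0))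
  have h7 : t⁻¹ * (A + (δ/4) * (t - t₀)) < δ := by
    rw [inv_mul_lt_iff₀ ht0]
    have hA0 : 0 ≤ A := abs_nonneg _
    have h8 : A + 1 ≤ (δ/4) * t := by
      have h9 : (A + |L| * t₀ + 1) ≤ (δ/4) * t := by
        have h10 := mul_le_mul_of_nonneg_left htA (by positivity : (0:ℝ) ≤ δ/4)
        have h11 : (δ/4) * ((A + |L| * t₀ + 1) * (4/δ)) = A + |L| * t₀ + 1 := by
          field_simp
        linarith
      nlinarith [abs_nonneg L, ht₀0]
    nlinarith [hδ, ht0, ht₀0, htt₀]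
  exact lt_of_le_of_lt h6 h7

lemma ultra_weaklim (g : ℝ → H) (R : ℝ) (hR : 0 ≤ R)
    (hbd : ∀ᶠ t in (atTop : Filter ℝ), ‖g t‖ ≤ R)
    (U : Ultrafilter ℝ) (hU : (U : Filter ℝ) ≤ atTop) :
    ∃ xb : H, ∀ y : H, Tendsto (fun t => (⟪g t, y⟫ : ℝ)) ↑U (𝓝 (⟪xb, y⟫ : ℝ)) := by
  have hbdU : ∀ᶠ t in (U : Filter ℝ), ‖g t‖ ≤ R := hU hbd
  have hc : ∀ y : H, ∃ c : ℝ, Tendsto (fun t => (⟪g t, y⟫ : ℝ)) ↑U (𝓝 c) := by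
    intro y
    have hmem : ∀ᶠ t in (U : Filter ℝ), (⟪g t, y⟫ : ℝ) ∈ Icc (-(R * ‖y‖)) (R * ‖y‖) := by
      filter_upwards [hbdU] with t ht
      have h1 : |(⟪g t, y⟫ : ℝ)| ≤ ‖g t‖ * ‖y‖ := abs_real_inner_le_norm _ _
      have h2 : ‖g t‖ * ‖y‖ ≤ R * ‖y‖ := mul_le_mul_of_nonneg_right ht (norm_nonneg _)
      constructor <;> [linarith [neg_abs_le (⟪g t, y⟫ : ℝ)]; linarith [le_abs_self (⟪g t, y⟫ : ℝ)]]
    have hle : ↑(U.map fun t => (⟪g t, y⟫ : ℝ)) ≤ 𝓟 (Icc (-(R * ‖y‖)) (R * ‖y‖)) := by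
      rw [Ultrafilter.coe_map, le_principal_iff, mem_map]
      exact hmem
    obtain ⟨c, _, hc⟩ := (isCompact_Icc).ultrafilter_le_nhds _ hle
    exact ⟨c, hc⟩
  choose c hc using hc
  have hadd : ∀ y z : H, c (y + z) = c y + c z := by
    intro y z
    have h1 : Tendsto (fun t => (⟪g t, y + z⟫ : ℝ)) ↑U (𝓝 (c y + c z)) := by
      have := (hc y).add (hc z)
      refine this.congr fun t => ?_
      rw [inner_add_right]
    exact tendsto_nhds_unique (hc (y + z)) h1
  have hsmul : ∀ (a : ℝ) (y : H), c (a • y) = a * c y := by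
    intro a y
    have h1 : Tendsto (fun t => (⟪g t, a • y⟫ : ℝ)) ↑U (𝓝 (a * c y)) := by
      have := (hc y).const_mul a
      refine this.congr fun t => ?_
      rw [real_inner_smul_right]
    exact tendsto_nhds_unique (hc (a • y)) h1
  have hbound : ∀ y : H, ‖c y‖ ≤ R * ‖y‖ := by
    intro y
    have h1 : Tendsto (fun t => |(⟪g t, y⟫ : ℝ)|) ↑U (𝓝 |c y|) := (hc y).abs
    rw [Real.norm_eq_abs]
    refine le_of_tendsto h1 ?_
    filter_upwards [hbdU] with t ht
    exact (abs_real_inner_le_norm _ _).trans (mul_le_mul_of_nonneg_right ht (norm_nonneg _))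
  set Lmap : H →ₗ[ℝ] ℝ :=
    { toFun := c, map_add' := hadd, map_smul' := hsmul } with hLmap
  set Lc : H →L[ℝ] ℝ := LinearMap.mkContinuous Lmap R hbound with hLc
  refine ⟨(InnerProductSpace.toDual ℝ H).symm Lc, fun y => ?_⟩
  have : (⟪(InnerProductSpace.toDual ℝ H).symm Lc, y⟫ : ℝ) = Lc y :=
    InnerProductSpace.toDual_symm_apply
  rw [this]
  exact hc y
end Aux

set_option maxHeartbeats 1000000

/-- Weak ergodic convergence for `ẋ(t) + A(x(t)) + ε(t) B(x(t)) ∋ 0`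
with a fast decaying parameter (`∫ ε < ∞`), toward a zero of `A + N_{cl(dom B)}`. -/
theorem weak_ergodic_convergence_fast_eps
    (A B : Set (H × H)) (hA : MaximalMonotoneGraph A) (hB : MaximalMonotoneGraph B)
    (hmaxANB : MaximalMonotoneGraph (GraphSum A (NormalConeGraph (closure (GraphDom B)))))
    (hSne : ∃ z : H, (z, 0) ∈ GraphSum A (NormalConeGraph (closure (GraphDom B))))
    (ε : ℝ → ℝ) (hεmeas : Measurable ε) (hεnonneg : ∀ t : ℝ, 0 ≤ t → 0 ≤ ε t)
    (hmaxt : ∀ t : ℝ, 0 ≤ t → MaximalMonotoneGraph (ScaledSum A B (ε t)))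
    (hεint : ∫⁻ t in Ici (0:ℝ), ENNReal.ofReal (ε t) < ⊤)
    (hGfin : ∀ z ∈ GraphDom A ∩ closure (GraphDom B), BH B z 0 ≠ ⊤)
    (x x' : ℝ → H) (hx : LocAC x x')
    (hsol : ∀ᵐ t ∂(volume.restrict (Ioi (0:ℝ))), (x t, -x' t) ∈ ScaledSum A B (ε t)) :
    ∃ xlim : H, (xlim, 0) ∈ GraphSum A (NormalConeGraph (closure (GraphDom B))) ∧
      WeakAvgConv x xlim := by
  obtain ⟨hloc, hxint⟩ := hx
  set M := GraphSum A (NormalConeGraph (closure (GraphDom B))) with hMdef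
  -- B is nonempty
  have hBne : B.Nonempty := by
    rcases B.eq_empty_or_nonempty with hemp | hne
    · exfalso
      have hmono : MonotoneGraph (insert ((0:H), (0:H)) B) := by
        intro p hp q hq
        rw [hemp] at hp hq
        simp only [insert_empty_eq, mem_singleton_iff] at hp hq
        rw [hp, hq]; simp
      have h2 := hB.2 _ hmono (subset_insert _ _)
      have h3 : ((0:H), (0:H)) ∈ B := h2 ▸ mem_insert _ _
      rw [hemp] at h3
      exact absurd h3 (notMem_empty _)
    · exact hne
  -- bounds from BH finiteness
  have hGb : ∀ y w : H, (y, w) ∈ M → ∃ G : ℝ, 0 ≤ G ∧ ∀ q ∈ B, (⟪y - q.1, q.2⟫ : ℝ) ≤ G := by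
    rintro y w ⟨u, p, huA, hpN, -⟩
    exact BH_bound B hBne y (hGfin y ⟨⟨u, huA⟩, hpN.1⟩)
  have hεi : IntegrableOn ε (Ioi 0) := eps_int ε hεmeas hεnonneg hεint
  have hdiff : ∀ y w : H, (y, w) ∈ M → ∀ G : ℝ, (∀ q ∈ B, (⟪y - q.1, q.2⟫ : ℝ) ≤ G) →
      ∀ᵐ r ∂(volume.restrict (Ioi (0:ℝ))),
        (⟪x' r, x r - y⟫ : ℝ) ≤ ⟪y - x r, w⟫ + ε r * G :=
    fun y w hyw G hG => diff_ineq A B hA.1 ε hεnonneg x x' hsol y w hyw G hG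
  -- boundedness of trajectory
  obtain ⟨z₀, hz₀⟩ := hSne
  obtain ⟨G₀, hG₀0, hG₀⟩ := hGb z₀ 0 hz₀
  obtain ⟨R, hR0, hR⟩ := traj_bdd x' x hloc hxint ε hεi hεnonneg z₀ G₀ hG₀0
    (hdiff z₀ 0 hz₀ G₀ hG₀)
  have hcont : ContinuousOn x (Ici 0) := traj_cont x' x hloc hxint
  have hxIoc : ∀ t : ℝ, IntegrableOn x (Ioc 0 t) := by
    intro t
    refine ((hcont.mono (fun r (hr : r ∈ Icc 0 (max t 0)) => hr.1)).integrableOn_Icc).mono_set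
      fun r hr => ⟨hr.1.le, hr.2.trans (le_max_left _ _)⟩
  -- the ergodic average (set-integral version)
  set σ : ℝ → H := fun t => t⁻¹ • ∫ r in Ioc 0 t, x r with hσdef
  have hσbd : ∀ᶠ t in (atTop : Filter ℝ), ‖σ t‖ ≤ R := by
    filter_upwards [eventually_ge_atTop (1:ℝ)] with t ht
    have ht0 : (0:ℝ) < t := lt_of_lt_of_le one_pos ht
    have h1 : ‖∫ r in Ioc 0 t, x r‖ ≤ R * (volume (Ioc (0:ℝ) t)).toReal := by
      refine norm_setIntegral_le_of_norm_le_const measure_Ioc_lt_top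
        (fun r hr => hR r hr.1.le)
    rw [Real.volume_Ioc, ENNReal.toReal_ofReal (by linarith)] at h1
    rw [hσdef]
    simp only [norm_smul, norm_inv, Real.norm_eq_abs, abs_of_pos ht0]
    calc t⁻¹ * ‖∫ r in Ioc 0 t, x r‖ ≤ t⁻¹ * (R * (t - 0)) :=
          mul_le_mul_of_nonneg_left h1 (inv_pos.mpr ht0).le
    _ = R := by field_simp; ring
  have hinner : ∀ (y : H) (t : ℝ), (⟪σ t, y⟫ : ℝ) = t⁻¹ * ∫ r in Ioc 0 t, (⟪x r, y⟫ : ℝ) := by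
    intro y t
    rw [hσdef]
    simp only [real_inner_smul_left]
    congr 1
    have h1 := integral_inner (𝕜 := ℝ) (hxIoc t) y
    rw [real_inner_comm, ← h1]
    exact integral_congr_ae (Eventually.of_forall fun r => real_inner_comm _ _)
  have hqint : ∀ (y : H) (b : ℝ), IntegrableOn (fun r => (⟪x r, y⟫ : ℝ)) (Ioc 0 b) := by
    intro y b
    refine ((hxIoc b).const_inner (𝕜 := ℝ) y).congr
      (Eventually.of_forall fun r => real_inner_comm _ _)
  -- KEY: along any ultrafilter finer than atTop, σ has a weak limit lying in M⁻¹0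
  have KEY : ∀ U : Ultrafilter ℝ, (U : Filter ℝ) ≤ atTop →
      ∃ xb : H, (xb, 0) ∈ M ∧
        ∀ y : H, Tendsto (fun t => (⟪σ t, y⟫ : ℝ)) ↑U (𝓝 (⟪xb, y⟫ : ℝ)) := by
    intro U hU
    obtain ⟨xb, hxb⟩ := ultra_weaklim σ R hR0 hσbd U hU
    refine ⟨xb, ?_, hxb⟩
    have hineq : ∀ p ∈ M, (0:ℝ) ≤ ⟪p.1 - xb, p.2⟫ := by
      rintro ⟨y, w⟩ hyw
      obtain ⟨G, hG0, hG⟩ := hGb y w hyw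
      have hae := hdiff y w hyw G hG
      set Cst : ℝ := ‖x 0 - y‖ ^ 2 / 2 + G * ∫ r in Ioi (0:ℝ), ε r with hCst
      have hlow : ∀ t : ℝ, 1 ≤ t → -Cst * t⁻¹ ≤ ⟪y, w⟫ - ⟪σ t, w⟫ := by
        intro t ht
        have ht0 : (0:ℝ) < t := lt_of_lt_of_le one_pos ht
        have h1 := energy_ineq x' x hloc hxint ε hεi y w G hae le_rfl ht0.le
        have h2 : ∫ r in Ioc 0 t, (⟪y - x r, w⟫ : ℝ)
            = t * ⟪y, w⟫ - ∫ r in Ioc 0 t, (⟪x r, w⟫ : ℝ) := by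
          have hptw : (fun r => (⟪y - x r, w⟫ : ℝ))
              = fun r => (⟪y, w⟫ : ℝ) - ⟪x r, w⟫ := by
            funext r; rw [inner_sub_left]
          rw [hptw, integral_sub (integrableOn_const (C := (⟪y, w⟫ : ℝ)) measure_Ioc_lt_top.ne)
            (hqint w t), setIntegral_const, measureReal_def, Real.volume_Ioc,
            ENNReal.toReal_ofReal (by linarith), smul_eq_mul]
          ring
        have h3 : ∫ r in Ioc 0 t, ε r ≤ ∫ r in Ioi (0:ℝ), ε r := by
          refine setIntegral_mono_set hεi ?_ ?_
          · filter_upwards [ae_restrict_mem measurableSet_Ioi] with r hr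
            exact hεnonneg r (le_of_lt hr)
          · exact HasSubset.Subset.eventuallyLE (fun r hr => hr.1)
        have hE0 : (0:ℝ) ≤ ∫ r in Ioi (0:ℝ), ε r := eps_tail_nonneg ε hεnonneg le_rfl
        have hsq : (0:ℝ) ≤ ‖x t - y‖ ^ 2 := sq_nonneg _
        have hkey : -Cst ≤ t * ⟪y, w⟫ - ∫ r in Ioc 0 t, (⟪x r, w⟫ : ℝ) := by
          rw [← h2, hCst]
          nlinarith [h1, mul_le_mul_of_nonneg_left h3 hG0]
        have heq2 : (⟪y, w⟫ : ℝ) - ⟪σ t, w⟫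
            = t⁻¹ * (t * ⟪y, w⟫ - ∫ r in Ioc 0 t, (⟪x r, w⟫ : ℝ)) := by
          rw [hinner w t]
          field_simp
        rw [heq2, show -Cst * t⁻¹ = t⁻¹ * -Cst by ring]
        exact mul_le_mul_of_nonneg_left hkey (inv_pos.mpr ht0).le
      have hT0 : Tendsto (fun t : ℝ => -Cst * t⁻¹) ↑U (𝓝 0) := by
        have := (tendsto_inv_atTop_zero (𝕜 := ℝ)).const_mul (-Cst)
        rw [mul_zero] at this
        exact this.mono_left hU
      have hTl : Tendsto (fun t => (⟪y, w⟫ : ℝ) - ⟪σ t, w⟫) ↑U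
          (𝓝 ((⟪y, w⟫ : ℝ) - ⟪xb, w⟫)) := tendsto_const_nhds.sub (hxb w)
      have hev1 : ∀ᶠ t in (U : Filter ℝ), (1:ℝ) ≤ t := hU (eventually_ge_atTop (1:ℝ))
      have hfin := le_of_tendsto_of_tendsto hT0 hTl
        (by filter_upwards [hev1] with t ht using hlow t ht)
      rw [inner_sub_left]
      linarith
    have hmonoN : MonotoneGraph (insert (xb, (0:H)) M) := by
      rintro p hp q hq
      rcases hp with hp | hp <;> rcases hq with hq | hq
      · rw [hp, hq]; simp
      · rw [hp]
        have := hineq q hq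
        simp only [sub_zero]
        have e1 : (⟪xb - q.1, (0:H) - q.2⟫ : ℝ) = ⟪q.1 - xb, q.2⟫ := by
          rw [zero_sub, inner_neg_right, show xb - q.1 = -(q.1 - xb) by abel, inner_neg_left]
          ring
        rw [e1]; exact this
      · rw [hq]
        have := hineq p hp
        have e1 : (⟪p.1 - xb, p.2 - 0⟫ : ℝ) = ⟪p.1 - xb, p.2⟫ := by rw [sub_zero]
        rw [e1]; exact this
      · exact hmaxANB.1 p hp q hq
    have hNM := hmaxANB.2 _ hmonoN (subset_insert _ _)
    have hmem : (xb, (0:H)) ∈ insert (xb, (0:H)) M := mem_insert _ _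
    rw [hNM] at hmem
    exact hmem
  -- apply to the canonical ultrafilter
  obtain ⟨xb, hxbM, hxbT⟩ := KEY (Ultrafilter.of atTop) (Ultrafilter.of_le _)
  refine ⟨xb, hxbM, ?_⟩
  intro y
  suffices hsuff : Tendsto (fun t => (⟪σ t, y⟫ : ℝ)) atTop (𝓝 (⟪xb, y⟫ : ℝ)) by
    refine hsuff.congr' ?_
    filter_upwards [eventually_ge_atTop (0:ℝ)] with t ht
    rw [hσdef, intervalIntegral.integral_of_le ht]
  by_contra hcon
  rw [Metric.tendsto_atTop] at hcon
  push_neg at hcon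
  obtain ⟨δ, hδ, hfreq⟩ := hcon
  have hfreq' : ∃ᶠ t in (atTop : Filter ℝ),
      δ ≤ dist (⟪σ t, y⟫ : ℝ) (⟪xb, y⟫ : ℝ) := by
    rw [frequently_atTop]
    intro a
    obtain ⟨t, ht1, ht2⟩ := hfreq a
    exact ⟨t, ht1, ht2⟩
  have hNB : NeBot ((atTop : Filter ℝ) ⊓
      𝓟 {t | δ ≤ dist (⟪σ t, y⟫ : ℝ) (⟪xb, y⟫ : ℝ)}) := by
    rwa [← frequently_iff_neBot]
  set U' : Ultrafilter ℝ := Ultrafilter.of ((atTop : Filter ℝ) ⊓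
      𝓟 {t | δ ≤ dist (⟪σ t, y⟫ : ℝ) (⟪xb, y⟫ : ℝ)}) with hU'def
  have hU'le : (U' : Filter ℝ) ≤ atTop := (Ultrafilter.of_le _).trans inf_le_left
  have hU'S : ∀ᶠ t in (U' : Filter ℝ), δ ≤ dist (⟪σ t, y⟫ : ℝ) (⟪xb, y⟫ : ℝ) :=
    ((Ultrafilter.of_le _).trans inf_le_right) (mem_principal_self _)
  obtain ⟨xb', hxb'M, hxb'T⟩ := KEY U' hU'le
  have h2 : δ ≤ dist (⟪xb', y⟫ : ℝ) (⟪xb, y⟫ : ℝ) := by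
    have h1 : Tendsto (fun t => dist (⟪σ t, y⟫ : ℝ) (⟪xb, y⟫ : ℝ)) ↑U'
        (𝓝 (dist (⟪xb', y⟫ : ℝ) (⟪xb, y⟫ : ℝ))) := (hxb'T y).dist tendsto_const_nhds
    exact ge_of_tendsto h1 hU'S
  -- uniqueness of weak cluster points
  have heqb : xb = xb' := by
    set d := xb - xb' with hd
    obtain ⟨G1, hG10, hG1⟩ := hGb xb 0 hxbM
    obtain ⟨G2, hG20, hG2⟩ := hGb xb' 0 hxb'M
    obtain ⟨ℓ1, hℓ1⟩ := hconv x' x hloc hxint ε hεi hεnonneg xb G1 hG10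
      (hdiff xb 0 hxbM G1 hG1)
    obtain ⟨ℓ2, hℓ2⟩ := hconv x' x hloc hxint ε hεi hεnonneg xb' G2 hG20
      (hdiff xb' 0 hxb'M G2 hG2)
    have hq : Tendsto (fun t => (⟪x t, d⟫ : ℝ)) atTop
        (𝓝 ((ℓ2 - ℓ1 + ‖xb‖ ^ 2 - ‖xb'‖ ^ 2) / 2)) := by
      have hptw : ∀ t : ℝ, (⟪x t, d⟫ : ℝ)
          = (‖x t - xb'‖ ^ 2 - ‖x t - xb‖ ^ 2 + ‖xb‖ ^ 2 - ‖xb'‖ ^ 2) / 2 := by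
        intro t
        have e1 := norm_sub_sq_real (x t) xb
        have e2 := norm_sub_sq_real (x t) xb'
        have e3 : (⟪x t, d⟫ : ℝ) = ⟪x t, xb⟫ - ⟪x t, xb'⟫ := by
          rw [hd, inner_sub_right]
        linarith
      have := (((hℓ2.sub hℓ1).add_const (‖xb‖ ^ 2)).sub_const (‖xb'‖ ^ 2)).div_const 2
      exact Tendsto.congr (fun t => (hptw t).symm) this
    have hQ := cesaro (fun r => (⟪x r, d⟫ : ℝ)) (hqint d) hq
    have hQσ : Tendsto (fun t => (⟪σ t, d⟫ : ℝ)) atTop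
        (𝓝 ((ℓ2 - ℓ1 + ‖xb‖ ^ 2 - ‖xb'‖ ^ 2) / 2)) :=
      hQ.congr fun t => (hinner d t).symm
    have he1 : (⟪xb, d⟫ : ℝ) = (ℓ2 - ℓ1 + ‖xb‖ ^ 2 - ‖xb'‖ ^ 2) / 2 :=
      tendsto_nhds_unique (hxbT d) (hQσ.mono_left (Ultrafilter.of_le _))
    have he2 : (⟪xb', d⟫ : ℝ) = (ℓ2 - ℓ1 + ‖xb‖ ^ 2 - ‖xb'‖ ^ 2) / 2 :=
      tendsto_nhds_unique (hxb'T d) (hQσ.mono_left hU'le)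
    have h3 : (⟪d, d⟫ : ℝ) = 0 := by
      rw [hd, inner_sub_left]
      rw [← hd]; linarith
    have h4 : d = 0 := by
      rwa [inner_self_eq_zero] at h3
    rw [hd] at h4
    exact sub_eq_zero.mp h4
  rw [heqb] at h2
  simp only [dist_self] at h2
  linarith
end

section
/- Assume (H_Ψ): Ψ : H → ℝ ∪ {+∞} is a closed convex proper function with inf_H Ψ = 0 and C = argmin Ψ ≠ ∅; and (H_Φ): Φ : H → ℝ ∪ {+∞} is a closed convex proper function with inf_C Φ = 0 and argmin_C Φ ≠ ∅. Suppose that S = argmin Ψ ∩ argmin Φ is nonempty and bounded, and that Ψ + Φ satisfies the inf-compactness property. Let β : [0,+∞) → [0,+∞) be a map with β(t) → +∞ as t → +∞. Then every strong global solution x(·) of ẋ(t) + ∂Φ(x(t)) + β(t) ∂Ψ(x(t)) ∋ 0 converges weakly in H, as t → +∞, to some x_∞ ∈ S = argmin Ψ ∩ argmin Φ. -/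
open MeasureTheory Set Filter Topology ENNReal RealInnerProductSpace

variable {H : Type*} [NormedAddCommGroup H] [InnerProductSpace ℝ H] [CompleteSpace H]

lemma aux_integrable_inner {w f : ℝ → H} {s t : ℝ}
    (hw : IntegrableOn w (Ioc s t)) (hf : ContinuousOn f (Icc s t)) :
    IntegrableOn (fun r => (⟪w r, f r⟫ : ℝ)) (Ioc s t) := by
  obtain ⟨C, hC⟩ := isCompact_Icc.exists_bound_of_continuousOn hf
  have hm : AEStronglyMeasurable (fun r => (⟪w r, f r⟫ : ℝ)) (volume.restrict (Ioc s t)) :=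
    AEStronglyMeasurable.inner hw.aestronglyMeasurable
      ((hf.mono Ioc_subset_Icc_self).aestronglyMeasurable measurableSet_Ioc)
  refine Integrable.mono' (hw.norm.mul_const C) hm ?_
  filter_upwards [ae_restrict_mem measurableSet_Ioc] with r hr
  calc ‖(⟪w r, f r⟫ : ℝ)‖ ≤ ‖w r‖ * ‖f r‖ := norm_inner_le_norm _ _
    _ ≤ ‖w r‖ * C := mul_le_mul_of_nonneg_left (hC r (Ioc_subset_Icc_self hr)) (norm_nonneg _)

lemma aux_half_sq {w : ℝ → H} {s t : ℝ} (hst : s ≤ t) (hw : IntegrableOn w (Icc s t)) :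
    ∫ r in s..t, (⟪w r, ∫ u in s..r, w u⟫ : ℝ) = (1/2) * ‖∫ r in s..t, w r‖^2 := by
  have huIcc : uIcc s t = Icc s t := uIcc_of_le hst
  have hwIoc : IntegrableOn w (Ioc s t) := hw.mono_set Ioc_subset_Icc_self
  have hsub : ∀ a b : ℝ, s ≤ a → a ≤ b → b ≤ t → IntervalIntegrable w volume a b := by
    intro a b ha hab hbt
    have : IntegrableOn w (uIcc a b) := by
      rw [uIcc_of_le hab]; exact hw.mono_set (Icc_subset_Icc ha hbt)
    exact this.intervalIntegrable
  have hprim : ContinuousOn (fun r => ∫ u in s..r, w u) (Icc s t) := by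
    have := intervalIntegral.continuousOn_primitive_interval (μ := volume) (a := s) (b := t)
      (by rw [huIcc]; exact hw)
    rwa [huIcc] at this
  have hprim' : ContinuousOn (fun r => ∫ u in r..t, w u) (Icc s t) := by
    have := intervalIntegral.continuousOn_primitive_interval_left (μ := volume) (a := s) (b := t)
      (by rw [huIcc]; exact hw)
    rwa [huIcc] at this
  have hTint : IntegrableOn (fun r => (⟪w r, ∫ u in s..r, w u⟫ : ℝ)) (Ioc s t) :=
    aux_integrable_inner hwIoc hprim
  have hT'int : IntegrableOn (fun r => (⟪w r, ∫ u in r..t, w u⟫ : ℝ)) (Ioc s t) :=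
    aux_integrable_inner hwIoc hprim'
  set D := ∫ r in s..t, w r with hD
  set T := ∫ r in s..t, (⟪w r, ∫ u in s..r, w u⟫ : ℝ) with hT
  set T' := ∫ r in s..t, (⟪w r, ∫ u in r..t, w u⟫ : ℝ) with hT'
  -- step B : T + T' = ‖D‖ ^ 2
  have hB : T + T' = ‖D‖^2 := by
    rw [hT, hT', intervalIntegral.integral_of_le hst, intervalIntegral.integral_of_le hst,
      ← integral_add hTint hT'int]
    have hcongr : ∀ r ∈ Ioc s t,
        (⟪w r, ∫ u in s..r, w u⟫ : ℝ) + (⟪w r, ∫ u in r..t, w u⟫ : ℝ) = (⟪w r, D⟫ : ℝ) := by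
      intro r hr
      rw [← inner_add_right, intervalIntegral.integral_add_adjacent_intervals
        (hsub s r le_rfl hr.1.le hr.2) (hsub r t hr.1.le hr.2 le_rfl)]
    rw [setIntegral_congr_fun measurableSet_Ioc hcongr]
    have h5 : ∫ r in Ioc s t, (⟪w r, D⟫ : ℝ) = (⟪∫ r in Ioc s t, w r, D⟫ : ℝ) := by
      rw [real_inner_comm D (∫ r in Ioc s t, w r), ← integral_inner hwIoc D]
      exact integral_congr_ae (Eventually.of_forall fun r => real_inner_comm _ _)
    rw [h5, ← intervalIntegral.integral_of_le hst, ← hD, real_inner_self_eq_norm_sq]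
  -- step C : T = T' via Fubini
  have hC : T = T' := by
    set μ := volume.restrict (Ioc s t) with hμ
    set F : ℝ × ℝ → ℝ :=
      fun p => Set.indicator {q : ℝ × ℝ | q.2 ≤ q.1} (fun q => (⟪w q.1, w q.2⟫ : ℝ)) p with hF
    have mset : MeasurableSet {q : ℝ × ℝ | q.2 ≤ q.1} :=
      measurableSet_le measurable_snd measurable_fst
    have hwm : AEStronglyMeasurable w μ := hwIoc.aestronglyMeasurable
    have hFm : AEStronglyMeasurable F (μ.prod μ) := by
      refine AEStronglyMeasurable.indicator ?_ mset
      exact AEStronglyMeasurable.inner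
        (hwm.comp_quasiMeasurePreserving (Measure.quasiMeasurePreserving_fst))
        (hwm.comp_quasiMeasurePreserving (Measure.quasiMeasurePreserving_snd))
    have hFint : Integrable F (μ.prod μ) := by
      refine Integrable.mono' (Integrable.mul_prod hwIoc.norm hwIoc.norm) hFm ?_
      refine Eventually.of_forall fun p => ?_
      simp only [hF, Set.indicator_apply]
      split_ifs with hp
      · exact norm_inner_le_norm _ _
      · simp only [norm_zero]
        exact mul_nonneg (norm_nonneg _) (norm_nonneg _)
    have hswap : ∫ r, (∫ u, F (r, u) ∂μ) ∂μ = ∫ u, (∫ r, F (r, u) ∂μ) ∂μ :=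
      integral_integral_swap hFint
    -- identify LHS with T
    have hL : ∫ r, (∫ u, F (r, u) ∂μ) ∂μ = T := by
      rw [hT, intervalIntegral.integral_of_le hst]
      refine setIntegral_congr_fun measurableSet_Ioc fun r hr => ?_
      have h1 : (fun u => F (r, u)) = Set.indicator (Iic r) (fun u => (⟪w r, w u⟫ : ℝ)) := by
        funext u
        simp only [hF, Set.indicator_apply, Set.mem_setOf_eq, Set.mem_Iic]
      rw [h1, integral_indicator measurableSet_Iic, hμ,
        Measure.restrict_restrict measurableSet_Iic]
      have h2 : Iic r ∩ Ioc s t = Ioc s r := by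
        ext u
        simp only [mem_inter_iff, mem_Iic, mem_Ioc]
        constructor
        · rintro ⟨h1', h2', _⟩; exact ⟨h2', h1'⟩
        · rintro ⟨h1', h2'⟩; exact ⟨h2', h1', h2'.trans hr.2⟩
      have h3 : IntegrableOn w (Ioc s r) := hwIoc.mono_set (Ioc_subset_Ioc le_rfl hr.2)
      rw [h2, integral_inner h3, ← intervalIntegral.integral_of_le hr.1.le]
    have hR : ∫ u, (∫ r, F (r, u) ∂μ) ∂μ = T' := by
      rw [hT', intervalIntegral.integral_of_le hst]
      refine setIntegral_congr_fun measurableSet_Ioc fun u hu => ?_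
      have h1 : (fun r => F (r, u)) = Set.indicator (Ici u) (fun r => (⟪w r, w u⟫ : ℝ)) := by
        funext r
        simp only [hF, Set.indicator_apply, Set.mem_setOf_eq, Set.mem_Ici]
      rw [h1, integral_indicator measurableSet_Ici, hμ,
        Measure.restrict_restrict measurableSet_Ici]
      have h2 : Ici u ∩ Ioc s t = Icc u t := by
        ext r
        simp only [mem_inter_iff, mem_Ici, mem_Ioc, mem_Icc]
        constructor
        · rintro ⟨h1', _, h3'⟩; exact ⟨h1', h3'⟩
        · rintro ⟨h1', h2'⟩; exact ⟨h1', hu.1.trans_le h1', h2'⟩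
      have h3 : IntegrableOn w (Ioc u t) := hwIoc.mono_set (Ioc_subset_Ioc hu.1.le le_rfl)
      have h4 : ∫ r in Ioc u t, (⟪w r, w u⟫ : ℝ) = (⟪w u, ∫ r in Ioc u t, w r⟫ : ℝ) := by
        rw [← integral_inner h3 (w u)]
        exact integral_congr_ae (Eventually.of_forall fun r => real_inner_comm _ _)
      rw [h2, integral_Icc_eq_integral_Ioc, h4, ← intervalIntegral.integral_of_le hu.2]
    rw [← hL, hswap, hR]
  linarith [hB, hC]

lemma aux_energy {x x' : ℝ → H} (hint : ∀ T : ℝ, IntegrableOn x' (Icc 0 T))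
    (hrep : ∀ t : ℝ, 0 ≤ t → x t = x 0 + ∫ s in (0:ℝ)..t, x' s)
    (z : H) {s t : ℝ} (hs : 0 ≤ s) (hst : s ≤ t) :
    ‖x t - z‖^2 - ‖x s - z‖^2 = 2 * ∫ r in s..t, (⟪x' r, x r - z⟫ : ℝ) := by
  have hii : ∀ a b : ℝ, 0 ≤ a → a ≤ b → IntervalIntegrable x' volume a b := by
    intro a b ha hab
    have : IntegrableOn x' (uIcc a b) := by
      rw [uIcc_of_le hab]; exact (hint b).mono_set (Icc_subset_Icc ha le_rfl)
    exact this.intervalIntegrable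
  have hdiff : ∀ a b : ℝ, 0 ≤ a → a ≤ b → x b - x a = ∫ r in a..b, x' r := by
    intro a b ha hab
    rw [hrep a ha, hrep b (ha.trans hab)]
    rw [add_sub_add_left_eq_sub]
    exact intervalIntegral.integral_interval_sub_left (hii 0 b (le_refl 0) (ha.trans hab))
      (hii 0 a (le_refl 0) ha)
  have hws : IntegrableOn x' (Icc s t) := (hint t).mono_set (Icc_subset_Icc hs le_rfl)
  have hwsIoc : IntegrableOn x' (Ioc s t) := hws.mono_set Ioc_subset_Icc_self
  -- rewrite the integrand
  have hcongr : ∀ r ∈ Ioc s t, (⟪x' r, x r - z⟫ : ℝ)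
      = (⟪x' r, x s - z⟫ : ℝ) + (⟪x' r, ∫ u in s..r, x' u⟫ : ℝ) := by
    intro r hr
    have : x r - z = (x s - z) + ∫ u in s..r, x' u := by
      have := hdiff s r hs hr.1.le
      rw [← this]; abel
    rw [this, inner_add_right]
  have hprim : ContinuousOn (fun r => ∫ u in s..r, x' u) (Icc s t) := by
    have := intervalIntegral.continuousOn_primitive_interval (μ := volume) (a := s) (b := t)
      (by rw [uIcc_of_le hst]; exact hws)
    rwa [uIcc_of_le hst] at this
  have h2int : IntegrableOn (fun r => (⟪x' r, ∫ u in s..r, x' u⟫ : ℝ)) (Ioc s t) :=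
    aux_integrable_inner hwsIoc hprim
  have h1int : IntegrableOn (fun r => (⟪x' r, x s - z⟫ : ℝ)) (Ioc s t) :=
    hwsIoc.inner_const (x s - z)
  have hsplit : ∫ r in s..t, (⟪x' r, x r - z⟫ : ℝ)
      = (∫ r in Ioc s t, (⟪x' r, x s - z⟫ : ℝ)) + ∫ r in Ioc s t, (⟪x' r, ∫ u in s..r, x' u⟫ : ℝ) := by
    rw [intervalIntegral.integral_of_le hst, setIntegral_congr_fun measurableSet_Ioc hcongr]
    exact integral_add h1int h2int
  have hfirst : ∫ r in Ioc s t, (⟪x' r, x s - z⟫ : ℝ) = (⟪x t - x s, x s - z⟫ : ℝ) := by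
    calc ∫ r in Ioc s t, (⟪x' r, x s - z⟫ : ℝ)
        = ∫ r in Ioc s t, (⟪x s - z, x' r⟫ : ℝ) :=
          integral_congr_ae (Eventually.of_forall fun r => real_inner_comm _ _)
      _ = (⟪x s - z, ∫ r in Ioc s t, x' r⟫ : ℝ) := integral_inner hwsIoc (x s - z)
      _ = (⟪x t - x s, x s - z⟫ : ℝ) := by
          rw [hdiff s t hs hst, intervalIntegral.integral_of_le hst]
          exact real_inner_comm _ _
  have hsecond : ∫ r in Ioc s t, (⟪x' r, ∫ u in s..r, x' u⟫ : ℝ)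
      = (1/2) * ‖x t - x s‖^2 := by
    rw [← intervalIntegral.integral_of_le hst, aux_half_sq hst hws, ← hdiff s t hs hst]
  have hnorm : ‖x t - z‖^2 = ‖x t - x s‖^2 + 2 * (⟪x t - x s, x s - z⟫ : ℝ) + ‖x s - z‖^2 := by
    have : x t - z = (x t - x s) + (x s - z) := by abel
    rw [this, norm_add_sq_real]
  rw [hsplit, hfirst, hsecond, hnorm]
  ring

/-- if `argmin Ψ ∩ argmin Φ` is nonempty and bounded, every trajectory of
`ẋ(t) + ∂Φ(x(t)) + β(t)∂Ψ(x(t)) ∋ 0` with `β(t) → +∞` converges weakly to a point of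
`argmin Ψ ∩ argmin Φ`. -/
theorem multiscale_gradient_nonempty_intersection
    (Ψ Φ : H → EReal)
    (hΨlsc : LowerSemicontinuous Ψ) (hΨconv : EConvex Ψ)
    (hΨproper : (∀ x : H, Ψ x ≠ ⊥) ∧ ∃ x : H, Ψ x ≠ ⊤)
    (hΨinf : (⨅ y : H, Ψ y) = (0 : EReal)) (hCne : (ArgMin Ψ).Nonempty)
    (hΦlsc : LowerSemicontinuous Φ) (hΦconv : EConvex Φ)
    (hΦproper : (∀ x : H, Φ x ≠ ⊥) ∧ ∃ x : H, Φ x ≠ ⊤)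
    (hΦinf : (⨅ y : ArgMin Ψ, Φ (y : H)) = (0 : EReal))
    (hSCne : (ArgMinOn Φ (ArgMin Ψ)).Nonempty)
    (hSne : (ArgMin Ψ ∩ ArgMin Φ).Nonempty)
    (hSbd : Bornology.IsBounded (ArgMin Ψ ∩ ArgMin Φ))
    (hcompact : InfCompact (fun y : H => Ψ y + Φ y))
    (β : ℝ → ℝ) (hβnonneg : ∀ t : ℝ, 0 ≤ t → 0 ≤ β t) (hβtop : Tendsto β atTop atTop)
    (x x' : ℝ → H) (hx : LocAC x x')
    (hsol : ∀ᵐ t ∂(volume.restrict (Ioi (0:ℝ))),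
      ∃ u ∈ ESubdiff Φ (x t), ∃ v ∈ ESubdiff Ψ (x t), x' t = -(u + β t • v)) :
    ∃ xlim ∈ ArgMin Ψ ∩ ArgMin Φ, WeakConv x xlim := by
  obtain ⟨hint, hrep⟩ := hx
  obtain ⟨z, hzΨ, hzΦ⟩ := hSne
  have hzΨ' : ∀ y : H, Ψ z ≤ Ψ y := hzΨ
  have hzΦ' : ∀ y : H, Φ z ≤ Φ y := hzΦ
  -- basic facts
  have hΨ0 : ∀ y : H, (0 : EReal) ≤ Ψ y := fun y => by
    rw [← hΨinf]; exact iInf_le _ y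
  have hΨz : Ψ z = 0 := le_antisymm (by rw [← hΨinf]; exact le_iInf hzΨ') (hΨ0 z)
  have hΦztop : Φ z ≠ ⊤ := by
    obtain ⟨y₀, hy₀⟩ := hΦproper.2
    intro h
    exact hy₀ (top_le_iff.mp (h ▸ hzΦ' y₀))
  set c : ℝ := (Φ z).toReal with hcdef
  have hc : Φ z = (c : EReal) := (EReal.coe_toReal hΦztop (hΦproper.1 z)).symm
  -- continuity of x on [0, T]
  have hcont : ∀ T : ℝ, ContinuousOn x (Icc 0 T) := by
    intro T
    rcases le_or_gt 0 T with hT | hT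
    · have hprim : ContinuousOn (fun r => ∫ u in (0:ℝ)..r, x' u) (Icc 0 T) := by
        have := intervalIntegral.continuousOn_primitive_interval (μ := volume) (a := (0:ℝ))
          (b := T) (by rw [uIcc_of_le hT]; exact hint T)
        rwa [uIcc_of_le hT] at this
      exact (continuousOn_const.add hprim).congr fun r hr => hrep r hr.1
    · rw [Icc_eq_empty (not_le.mpr hT)]
      exact continuousOn_empty x
  -- interval integrability of the energy integrand
  have hgii : ∀ (zz : H) {s t : ℝ}, 0 ≤ s → s ≤ t →
      IntervalIntegrable (fun r => (⟪x' r, x r - zz⟫ : ℝ)) volume s t := by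
    intro zz s t hs hst
    rw [intervalIntegrable_iff_integrableOn_Ioc_of_le hst]
    have h1 : IntegrableOn x' (Ioc s t) :=
      ((hint t).mono_set (Icc_subset_Icc hs le_rfl)).mono_set Ioc_subset_Icc_self
    have h2 : ContinuousOn (fun r => x r - zz) (Icc s t) :=
      ((hcont t).mono (Icc_subset_Icc hs le_rfl)).sub continuousOn_const
    exact aux_integrable_inner h1 h2
  -- key a.e. inequality
  have key : ∀ zz : H, zz ∈ ArgMin Ψ → zz ∈ ArgMin Φ →
      ∀ᵐ t ∂(volume.restrict (Ioi (0:ℝ))),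
        ∃ a p : ℝ, Φ (x t) = (a : EReal) ∧ Ψ (x t) = (p : EReal) ∧ c ≤ a ∧ 0 ≤ p ∧
          0 ≤ β t ∧ (⟪x' t, x t - zz⟫ : ℝ) ≤ -((a - c) + β t * p) := by
    intro zz hzzΨ hzzΦ
    have hzzΨ' : ∀ y : H, Ψ zz ≤ Ψ y := hzzΨ
    have hzzΦ' : ∀ y : H, Φ zz ≤ Φ y := hzzΦ
    have hΨzz : Ψ zz = 0 := le_antisymm (by rw [← hΨinf]; exact le_iInf hzzΨ') (hΨ0 zz)
    have hΦzz : Φ zz = (c : EReal) :=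
      le_antisymm (by rw [← hc]; exact hzzΦ' z) (by rw [← hc]; exact hzΦ' zz)
    filter_upwards [hsol, ae_restrict_mem measurableSet_Ioi] with t ht htpos
    obtain ⟨u, hu, v, hv, hx't⟩ := ht
    have huz : Φ (x t) + ((⟪u, zz - x t⟫ : ℝ) : EReal) ≤ Φ zz := hu zz
    have hvz : Ψ (x t) + ((⟪v, zz - x t⟫ : ℝ) : EReal) ≤ Ψ zz := hv zz
    have hΦxtop : Φ (x t) ≠ ⊤ := by
      intro h
      rw [h, EReal.top_add_coe, hΦzz] at huz
      exact absurd huz (not_le.mpr (EReal.coe_lt_top c))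
    have hΨxtop : Ψ (x t) ≠ ⊤ := by
      intro h
      rw [h, EReal.top_add_coe, hΨzz] at hvz
      exact absurd hvz (not_le.mpr (by exact_mod_cast EReal.coe_lt_top (0:ℝ)))
    set a : ℝ := (Φ (x t)).toReal with hadef
    have hA : Φ (x t) = (a : EReal) := (EReal.coe_toReal hΦxtop (hΦproper.1 _)).symm
    set p : ℝ := (Ψ (x t)).toReal with hpdef
    have hP : Ψ (x t) = (p : EReal) := (EReal.coe_toReal hΨxtop (hΨproper.1 _)).symm
    have hua : a + (⟪u, zz - x t⟫ : ℝ) ≤ c := by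
      rw [hA, hΦzz, ← EReal.coe_add] at huz
      exact_mod_cast huz
    have hvp : p + (⟪v, zz - x t⟫ : ℝ) ≤ 0 := by
      rw [hP, hΨzz, ← EReal.coe_add] at hvz
      exact_mod_cast hvz
    have hca : c ≤ a := by
      have := hzzΦ' (x t)
      rw [hΦzz, hA] at this
      exact_mod_cast this
    have hp0 : 0 ≤ p := by
      have := hΨ0 (x t)
      rw [hP] at this
      exact_mod_cast this
    have hβ0 : 0 ≤ β t := hβnonneg t (le_of_lt htpos)
    refine ⟨a, p, hA, hP, hca, hp0, hβ0, ?_⟩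
    have e1 : (⟪x' t, x t - zz⟫ : ℝ)
        = -(⟪u, x t - zz⟫ : ℝ) - β t * (⟪v, x t - zz⟫ : ℝ) := by
      rw [hx't]
      simp only [inner_neg_left, inner_add_left, real_inner_smul_left]
      ring
    have e2 : (⟪u, zz - x t⟫ : ℝ) = -(⟪u, x t - zz⟫ : ℝ) := by
      rw [show zz - x t = -(x t - zz) by abel, inner_neg_right]
    have e3 : (⟪v, zz - x t⟫ : ℝ) = -(⟪v, x t - zz⟫ : ℝ) := by
      rw [show zz - x t = -(x t - zz) by abel, inner_neg_right]
    rw [e2] at hua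
    rw [e3] at hvp
    have h4 : β t * p ≤ β t * (⟪v, x t - zz⟫ : ℝ) :=
      mul_le_mul_of_nonneg_left (by linarith) hβ0
    rw [e1]
    linarith
  -- the interval integral of the energy integrand is nonpositive
  have hgnonpos : ∀ zz : H, zz ∈ ArgMin Ψ → zz ∈ ArgMin Φ → ∀ s t : ℝ, 0 ≤ s → s ≤ t →
      ∫ r in s..t, (⟪x' r, x r - zz⟫ : ℝ) ≤ 0 := by
    intro zz h1 h2 s t hs hst
    rw [intervalIntegral.integral_of_le hst]
    refine integral_nonpos_of_ae ?_
    have hsub : Ioc s t ⊆ Ioi (0:ℝ) := fun r hr => lt_of_le_of_lt hs hr.1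
    filter_upwards [ae_restrict_of_ae_restrict_of_subset hsub (key zz h1 h2)] with r hr
    obtain ⟨a, p, _, _, hca, hp0, hβ0, hle⟩ := hr
    have : 0 ≤ β r * p := mul_nonneg hβ0 hp0
    simp only [Pi.zero_apply]
    linarith
  -- monotonicity of distances to points of S
  have hmono : ∀ zz : H, zz ∈ ArgMin Ψ → zz ∈ ArgMin Φ → ∀ s t : ℝ, 0 ≤ s → s ≤ t →
      ‖x t - zz‖ ≤ ‖x s - zz‖ := by
    intro zz h1 h2 s t hs hst
    have hE := aux_energy hint hrep zz hs hst
    have hneg := hgnonpos zz h1 h2 s t hs hst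
    nlinarith [norm_nonneg (x t - zz), norm_nonneg (x s - zz), sq_nonneg (‖x t - zz‖ - ‖x s - zz‖)]
  -- selection claim : we can find arbitrarily large times with small values
  have claim : ∀ ε : ℝ, 0 < ε → ∀ T₀ : ℝ, ∃ τ : ℝ, T₀ < τ ∧ 0 < τ ∧
      Φ (x τ) ≤ ((c + ε : ℝ) : EReal) ∧ Ψ (x τ) ≤ ((ε : ℝ) : EReal) := by
    intro ε hε T₀
    by_contra hcon
    push_neg at hcon
    obtain ⟨T₁, hT₁⟩ := eventually_atTop.mp (hβtop.eventually_ge_atTop 1)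
    set S₀ : ℝ := max (max T₀ T₁) 0 with hS₀def
    have hS₀0 : (0:ℝ) ≤ S₀ := le_max_right _ _
    have hS₀T₀ : T₀ ≤ S₀ := (le_max_left _ _).trans (le_max_left _ _)
    have hS₀T₁ : T₁ ≤ S₀ := (le_max_right _ _).trans (le_max_left _ _)
    obtain ⟨B, hBdef⟩ : ∃ B : ℝ, B = ‖x 0 - z‖^2 := ⟨_, rfl⟩
    have hB0 : 0 ≤ B := hBdef ▸ sq_nonneg _
    obtain ⟨T, hTdef⟩ : ∃ T : ℝ, T = S₀ + B/(2*ε) + 1 := ⟨_, rfl⟩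
    have hTS₀ : S₀ ≤ T := by
      have : 0 ≤ B/(2*ε) := div_nonneg hB0 (by linarith)
      linarith [hTdef]
    -- a.e. on (S₀, T] the integrand is ≤ -ε
    have hae : ∀ᵐ r ∂(volume.restrict (Ioc S₀ T)), (⟪x' r, x r - z⟫ : ℝ) ≤ -ε := by
      have hsub : Ioc S₀ T ⊆ Ioi (0:ℝ) := fun r hr => lt_of_le_of_lt hS₀0 hr.1
      filter_upwards [ae_restrict_of_ae_restrict_of_subset hsub (key z hzΨ hzΦ),
        ae_restrict_mem measurableSet_Ioc] with r hr hrmem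
      obtain ⟨a, p, hA, hP, hca, hp0, hβ0, hle⟩ := hr
      have h1β : 1 ≤ β r := hT₁ r (hS₀T₁.trans hrmem.1.le)
      have hd : c + ε < a ∨ ε < p := by
        have h0r : 0 < r := lt_of_le_of_lt hS₀0 hrmem.1
        have hT₀r : T₀ < r := lt_of_le_of_lt hS₀T₀ hrmem.1
        rcases le_or_gt (Φ (x r)) ((c + ε : ℝ) : EReal) with hle' | hgt
        · right
          have := hcon r hT₀r h0r hle'
          rw [hP] at this
          exact_mod_cast this
        · left
          rw [hA] at hgt
          exact_mod_cast hgt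
      rcases hd with hd | hd
      · have : 0 ≤ β r * p := mul_nonneg hβ0 hp0
        linarith
      · have : p ≤ β r * p := by nlinarith
        linarith
    -- integral comparison on (S₀, T]
    have hint1 : ∫ r in S₀..T, (⟪x' r, x r - z⟫ : ℝ) ≤ -ε * (T - S₀) := by
      rw [intervalIntegral.integral_of_le hTS₀]
      have hci : IntegrableOn (fun _ : ℝ => -ε) (Ioc S₀ T) := by
        exact integrableOn_const measure_Ioc_lt_top.ne
      have hgi : IntegrableOn (fun r => (⟪x' r, x r - z⟫ : ℝ)) (Ioc S₀ T) := by
        rw [← intervalIntegrable_iff_integrableOn_Ioc_of_le hTS₀]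
        exact hgii z hS₀0 hTS₀
      calc ∫ r in Ioc S₀ T, (⟪x' r, x r - z⟫ : ℝ)
          ≤ ∫ _ in Ioc S₀ T, (-ε) := integral_mono_ae hgi hci hae
        _ = -ε * (T - S₀) := by
            rw [setIntegral_const, measureReal_def, Real.volume_Ioc, smul_eq_mul,
              ENNReal.toReal_ofReal (by linarith)]
            ring
    -- integral on [0, S₀] is nonpositive
    have hint2 : ∫ r in (0:ℝ)..S₀, (⟪x' r, x r - z⟫ : ℝ) ≤ 0 :=
      hgnonpos z hzΨ hzΦ 0 S₀ le_rfl hS₀0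
    -- total bound from the energy identity
    have hE := aux_energy hint hrep z (le_refl (0:ℝ)) (hS₀0.trans hTS₀)
    have hsplitT : ∫ r in (0:ℝ)..T, (⟪x' r, x r - z⟫ : ℝ)
        = (∫ r in (0:ℝ)..S₀, (⟪x' r, x r - z⟫ : ℝ)) + ∫ r in S₀..T, (⟪x' r, x r - z⟫ : ℝ) :=
      (intervalIntegral.integral_add_adjacent_intervals (hgii z le_rfl hS₀0)
        (hgii z hS₀0 hTS₀)).symm
    have hfin : ‖x T - z‖^2 - B ≤ 2 * (-ε * (T - S₀)) := by
      rw [hBdef, hE, hsplitT]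
      nlinarith [hint1, hint2]
    have hval : -ε * (T - S₀) = -(B/2) - ε := by
      rw [hTdef]
      have h2ε : ε ≠ 0 := ne_of_gt hε
      field_simp
      ring
    nlinarith [sq_nonneg ‖x T - z‖, hfin, hval]
  -- choose the sequence of times
  have hseq : ∀ n : ℕ, ∃ τ : ℝ, (n:ℝ) < τ ∧ 0 < τ ∧
      Φ (x τ) ≤ ((c + 1/((n:ℝ)+1) : ℝ) : EReal) ∧ Ψ (x τ) ≤ ((1/((n:ℝ)+1) : ℝ) : EReal) :=
    fun n => claim (1/((n:ℝ)+1)) (by positivity) (n:ℝ)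
  choose tseq htgt htpos hτΦ hτΨ using hseq
  -- the sequence lies in a compact set
  set R : ℝ := ‖x 0 - z‖ + ‖z‖ + 1 with hRdef
  have hRpos : 0 < R := by positivity
  have hxnorm : ∀ n, ‖x (tseq n)‖ ≤ R := by
    intro n
    have h1 : ‖x (tseq n) - z‖ ≤ ‖x 0 - z‖ :=
      hmono z hzΨ hzΦ 0 (tseq n) le_rfl (le_of_lt (htpos n))
    calc ‖x (tseq n)‖ = ‖(x (tseq n) - z) + z‖ := by rw [sub_add_cancel]
      _ ≤ ‖x (tseq n) - z‖ + ‖z‖ := norm_add_le _ _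
      _ ≤ R := by rw [hRdef]; linarith
  have hfrac1 : ∀ n : ℕ, (1:ℝ)/((n:ℝ)+1) ≤ 1 := by
    intro n
    rw [div_le_one (by positivity)]
    have : (0:ℝ) ≤ (n:ℝ) := Nat.cast_nonneg n
    linarith
  have hlevel : ∀ n, Ψ (x (tseq n)) + Φ (x (tseq n)) ≤ ((c + 2 : ℝ) : EReal) := by
    intro n
    have h1 : Ψ (x (tseq n)) ≤ ((1:ℝ) : EReal) :=
      (hτΨ n).trans (EReal.coe_le_coe_iff.mpr (hfrac1 n))
    have h2 : Φ (x (tseq n)) ≤ ((c + 1 : ℝ) : EReal) :=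
      (hτΦ n).trans (EReal.coe_le_coe_iff.mpr (by linarith [hfrac1 n]))
    calc Ψ (x (tseq n)) + Φ (x (tseq n)) ≤ ((1:ℝ) : EReal) + ((c+1:ℝ) : EReal) :=
          add_le_add h1 h2
      _ = ((c + 2 : ℝ) : EReal) := by
          rw [← EReal.coe_add, EReal.coe_eq_coe_iff]
          ring
  have hK := hcompact R hRpos (c + 2)
  have hmem : ∀ n, x (tseq n) ∈
      closure {y : H | ‖y‖ ≤ R ∧ (fun y : H => Ψ y + Φ y) y ≤ ((c+2:ℝ) : EReal)} :=
    fun n => subset_closure ⟨hxnorm n, hlevel n⟩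
  obtain ⟨xbar, hxbarmem, φ, hφmono, hφtend⟩ := hK.tendsto_subseq hmem
  -- the limit is in ArgMin Ψ ∩ ArgMin Φ
  have hΨxbar : Ψ xbar ≤ 0 := by
    by_contra hcon2
    push_neg at hcon2
    obtain ⟨δ, hδ0, hδlt⟩ := EReal.lt_iff_exists_real_btwn.mp hcon2
    have hev : ∀ᶠ k in atTop, (δ : EReal) < Ψ (x (tseq (φ k))) :=
      hφtend.eventually (hΨlsc xbar (δ : EReal) hδlt)
    have hδℝ : (0:ℝ) < δ := by exact_mod_cast hδ0
    obtain ⟨k₀, hk₀⟩ := eventually_atTop.mp hev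
    obtain ⟨m, hm⟩ := exists_nat_one_div_lt hδℝ
    set k := max k₀ m with hkdef
    have h1 := hk₀ k (le_max_left _ _)
    have h2 : Ψ (x (tseq (φ k))) ≤ ((1/((φ k : ℝ)+1) : ℝ) : EReal) := hτΨ (φ k)
    have h3 : (1:ℝ)/((φ k : ℝ)+1) < δ := by
      have hk1 : (k:ℝ) ≤ (φ k : ℝ) := by exact_mod_cast hφmono.le_apply
      have hk2 : (m:ℝ) ≤ (k:ℝ) := by exact_mod_cast le_max_right k₀ m
      have : (1:ℝ)/((φ k : ℝ)+1) ≤ 1/((m:ℝ)+1) :=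
        one_div_le_one_div_of_le (by positivity) (by linarith)
      linarith
    have h4 : ((1/((φ k : ℝ)+1) : ℝ) : EReal) < (δ : EReal) := EReal.coe_lt_coe_iff.mpr h3
    exact absurd (h1.trans_le h2) (not_lt.mpr h4.le)
  have hΦxbar : Φ xbar ≤ (c : EReal) := by
    by_contra hcon2
    push_neg at hcon2
    obtain ⟨d, hd0, hdlt⟩ := EReal.lt_iff_exists_real_btwn.mp hcon2
    have hev : ∀ᶠ k in atTop, (d : EReal) < Φ (x (tseq (φ k))) :=
      hφtend.eventually (hΦlsc xbar (d : EReal) hdlt)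
    have hdℝ : c < d := by exact_mod_cast hd0
    obtain ⟨k₀, hk₀⟩ := eventually_atTop.mp hev
    obtain ⟨m, hm⟩ := exists_nat_one_div_lt (show (0:ℝ) < d - c by linarith)
    set k := max k₀ m with hkdef
    have h1 := hk₀ k (le_max_left _ _)
    have h2 : Φ (x (tseq (φ k))) ≤ ((c + 1/((φ k : ℝ)+1) : ℝ) : EReal) := hτΦ (φ k)
    have h3 : c + (1:ℝ)/((φ k : ℝ)+1) < d := by
      have hk1 : (k:ℝ) ≤ (φ k : ℝ) := by exact_mod_cast hφmono.le_apply
      have hk2 : (m:ℝ) ≤ (k:ℝ) := by exact_mod_cast le_max_right k₀ m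
      have : (1:ℝ)/((φ k : ℝ)+1) ≤ 1/((m:ℝ)+1) :=
        one_div_le_one_div_of_le (by positivity) (by linarith)
      linarith
    have h4 : ((c + 1/((φ k : ℝ)+1) : ℝ) : EReal) < (d : EReal) := EReal.coe_lt_coe_iff.mpr h3
    exact absurd (h1.trans_le h2) (not_lt.mpr h4.le)
  have hΨxbar0 : Ψ xbar = 0 := le_antisymm hΨxbar (hΨ0 xbar)
  have hxbarΨ : xbar ∈ ArgMin Ψ := by
    intro y
    rw [hΨxbar0]
    exact hΨ0 y
  have hxbarΦ : xbar ∈ ArgMin Φ := by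
    intro y
    refine hΦxbar.trans ?_
    rw [← hc]
    exact hzΦ' y
  -- strong convergence of the full trajectory to xbar
  have hdist : Tendsto (fun k => ‖x (tseq (φ k)) - xbar‖) atTop (𝓝 0) := by
    have h0 := (hφtend.sub (tendsto_const_nhds (x := xbar))).norm
    simpa using h0
  have hstrong : Tendsto x atTop (𝓝 xbar) := by
    rw [Metric.tendsto_atTop]
    intro ε hε
    obtain ⟨k, hk⟩ := (hdist.eventually (gt_mem_nhds hε)).exists
    refine ⟨tseq (φ k), fun t ht => ?_⟩
    have h1 : ‖x t - xbar‖ ≤ ‖x (tseq (φ k)) - xbar‖ :=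
      hmono xbar hxbarΨ hxbarΦ (tseq (φ k)) t (le_of_lt (htpos (φ k))) ht
    rw [dist_eq_norm]
    exact lt_of_le_of_lt h1 hk
  exact ⟨xbar, ⟨hxbarΨ, hxbarΦ⟩, fun y => hstrong.inner tendsto_const_nhds⟩
end
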